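/- arXiv:1012.0129 — 4 statements merged into one kernel-verified Lean document; each statement's English description precedes it below -/
import Mathlib

section
/- Let G be an infinite finitely generated abelian group isomorphic to ℤ^(m) ⊕ ℤ_{n_1} ⊕ … ⊕ ℤ_{n_k}, where each n_i ≥ 2 and n_{i+1} divides n_i for all 1 ≤ i ≤ k−1. If m ≥ 3, then G is S_2-capable. -/
/-- The commutator `[a,b] = a⁻¹ * b⁻¹ * a * b`. -/
def pcomm {E : Type} [Group E] (a b : E) : E := a⁻¹ * b⁻¹ * a * b

/-- The word `w(x,y,z,u) = [[x,y],[z,u]]` defining the variety `S_2` of metabelian groups. -/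
def metaW {E : Type} [Group E] (x y z u : E) : E := pcomm (pcomm x y) (pcomm z u)

/-- The marginal set of a group `E` with respect to the variety `S_2` of metabelian
groups: all `a ∈ E` such that replacing any one argument `g` of `w` by `g * a`
leaves the value of `w` unchanged. -/
def s2MarginalSet (E : Type) [Group E] : Set E :=
  {a : E | ∀ x y z u : E,
    metaW (x * a) y z u = metaW x y z u ∧
    metaW x (y * a) z u = metaW x y z u ∧
    metaW x y (z * a) u = metaW x y z u ∧
    metaW x y z (u * a) = metaW x y z u}

/-- `G` is `S_2`-capable if `G ≅ E / V*(E)` for some group `E`, where `V*(E)` is the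
marginal (normal) subgroup of `E` with respect to the variety of metabelian groups,
i.e. the normal subgroup whose underlying set is `s2MarginalSet E`. -/
def IsS2Capable (G : Type) [Group G] : Prop :=
  ∃ (E : Type) (_ : Group E) (H : Subgroup E) (_ : H.Normal),
    (H : Set E) = s2MarginalSet E ∧ Nonempty (G ≃* E ⧸ H)

namespace S2Cap

variable {Γ : Type} [Group Γ]

lemma pcomm_mul_right (c p q : Γ) : pcomm c (p * q) = pcomm c q * (q⁻¹ * pcomm c p * q) := by
  unfold pcomm; group

lemma pcomm_mul_left (p q d : Γ) : pcomm (p * q) d = (q⁻¹ * pcomm p d * q) * pcomm q d := by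
  unfold pcomm; group

lemma conj_eq (g a : Γ) : a⁻¹ * g * a = g * pcomm g a := by unfold pcomm; group

lemma pcomm_inv (a u : Γ) : pcomm a u = (pcomm u a)⁻¹ := by unfold pcomm; group

lemma pcomm_one (g : Γ) : pcomm g 1 = 1 := by unfold pcomm; group

lemma pcomm_eq_one {g h : Γ} (hc : g * h = h * g) : pcomm g h = 1 := by
  unfold pcomm
  calc g⁻¹ * h⁻¹ * g * h = g⁻¹ * h⁻¹ * (g * h) := by group
    _ = g⁻¹ * h⁻¹ * (h * g) := by rw [hc]
    _ = 1 := by group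

lemma conj_eq_self {t s : Γ} (hc : t * s = s * t) : t⁻¹ * s * t = s := by
  calc t⁻¹ * s * t = t⁻¹ * (s * t) := by group
    _ = t⁻¹ * (t * s) := by rw [hc]
    _ = s := by group

lemma commute_of_pcomm_eq_one {g h : Γ} (hp : pcomm g h = 1) : g * h = h * g := by
  calc g * h = (h * g) * pcomm g h := by unfold pcomm; group
    _ = h * g := by rw [hp, mul_one]

lemma key_SL (a x y z u : Γ)
    (H : ∀ g p q : Γ, Commute (pcomm g a) (pcomm p q)) :
    pcomm (pcomm x y) (pcomm z u * pcomm (pcomm z u) a) = pcomm (pcomm x y) (pcomm z u) := by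
  rw [pcomm_mul_right]
  rw [pcomm_eq_one ((H (pcomm z u) x y).eq.symm)]
  rw [conj_eq_self ((H (pcomm z u) (pcomm x y) (pcomm z u)).eq)]
  rw [one_mul]

lemma marginal_of_commute (a : Γ)
    (H : ∀ g p q : Γ, Commute (pcomm g a) (pcomm p q)) :
    a ∈ s2MarginalSet Γ := by
  intro x y z u
  have hcx : pcomm (pcomm x y * pcomm (pcomm x y) a) (pcomm z u)
      = pcomm (pcomm x y) (pcomm z u) := by
    rw [pcomm_mul_left]
    rw [pcomm_eq_one ((H (pcomm x y) z u).eq)]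
    rw [conj_eq_self ((H (pcomm x y) (pcomm x y) (pcomm z u)).eq)]
    rw [mul_one]
  refine ⟨?_, ?_, ?_, ?_⟩
  · -- slot x
    show pcomm (pcomm (x * a) y) (pcomm z u) = pcomm (pcomm x y) (pcomm z u)
    rw [pcomm_mul_left x a y, conj_eq (pcomm x y) a]
    rw [pcomm_mul_left (pcomm x y * pcomm (pcomm x y) a) (pcomm a y) (pcomm z u)]
    rw [pcomm_inv a y]
    rw [pcomm_eq_one (((H y z u).inv_left).eq)]
    rw [mul_one, hcx]
    rw [conj_eq_self (((H y (pcomm x y) (pcomm z u)).inv_left).eq)]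
  · -- slot y
    show pcomm (pcomm x (y * a)) (pcomm z u) = pcomm (pcomm x y) (pcomm z u)
    rw [pcomm_mul_right x y a, conj_eq (pcomm x y) a]
    rw [pcomm_mul_left (pcomm x a) (pcomm x y * pcomm (pcomm x y) a) (pcomm z u)]
    rw [pcomm_eq_one ((H x z u).eq)]
    rw [hcx]
    simp only [mul_one, one_mul, inv_mul_cancel]
  · -- slot z
    show pcomm (pcomm x y) (pcomm (z * a) u) = pcomm (pcomm x y) (pcomm z u)
    rw [pcomm_mul_left z a u, conj_eq (pcomm z u) a]
    rw [pcomm_mul_right (pcomm x y) (pcomm z u * pcomm (pcomm z u) a) (pcomm a u)]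
    rw [pcomm_inv a u]
    rw [pcomm_eq_one (((H u x y).inv_left).eq.symm)]
    rw [key_SL a x y z u H]
    rw [conj_eq_self (((H u (pcomm x y) (pcomm z u)).inv_left).eq)]
    rw [one_mul]
  · -- slot u
    show pcomm (pcomm x y) (pcomm z (u * a)) = pcomm (pcomm x y) (pcomm z u)
    rw [pcomm_mul_right z u a, conj_eq (pcomm z u) a]
    rw [pcomm_mul_right (pcomm x y) (pcomm z a) (pcomm z u * pcomm (pcomm z u) a)]
    rw [pcomm_eq_one ((H z x y).eq.symm)]
    rw [key_SL a x y z u H]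
    simp only [mul_one, one_mul, inv_mul_cancel]


open Matrix

variable {R : Type} [CommRing R]

def Lev (c : ℕ) (M : Matrix (Fin 5) (Fin 5) R) : Prop :=
  ∀ i j : Fin 5, (j : ℕ) < (i : ℕ) + c → M i j = 0

lemma lev_zero (c : ℕ) : Lev c (0 : Matrix (Fin 5) (Fin 5) R) := fun _ _ _ => rfl
lemma lev_mono {c c' : ℕ} (h : c' ≤ c) {M : Matrix (Fin 5) (Fin 5) R} (hM : Lev c M) :
    Lev c' M := fun i j hij => hM i j (by omega)
lemma lev_add {c : ℕ} {M N : Matrix (Fin 5) (Fin 5) R} (hM : Lev c M) (hN : Lev c N) :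
    Lev c (M + N) := fun i j hij => by
  simp [Matrix.add_apply, hM i j hij, hN i j hij]
lemma lev_neg {c : ℕ} {M : Matrix (Fin 5) (Fin 5) R} (hM : Lev c M) :
    Lev c (-M) := fun i j hij => by
  simp [Matrix.neg_apply, hM i j hij]
lemma lev_sub {c : ℕ} {M N : Matrix (Fin 5) (Fin 5) R} (hM : Lev c M) (hN : Lev c N) :
    Lev c (M - N) := by
  rw [sub_eq_add_neg]; exact lev_add hM (lev_neg hN)
lemma lev_mul {c d : ℕ} {M N : Matrix (Fin 5) (Fin 5) R} (hM : Lev c M) (hN : Lev d N) :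
    Lev (c + d) (M * N) := by
  intro i j hij
  rw [Matrix.mul_apply]
  apply Finset.sum_eq_zero
  intro l _
  by_cases hl : (l : ℕ) < (i : ℕ) + c
  · rw [hM i l hl, zero_mul]
  · rw [hN l j (by omega), mul_zero]
lemma lev_five {M : Matrix (Fin 5) (Fin 5) R} (hM : Lev 5 M) : M = 0 := by
  ext i j
  exact hM i j (by omega)

/-! ### construction -/

variable (m' k : ℕ) (n : Fin k → ℕ)

/-- generator / chain index -/
abbrev Idx := Fin (m' + 3) ⊕ Fin k

/-- the abelianized data -/
abbrev VT := (Fin (m' + 3) → ℤ) × ((i : Fin k) → ZMod (n i))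

/-- coefficient ring of each chain -/
def RC : Idx m' k → Type
  | .inl _ => ℤ
  | .inr i => ZMod (n i)

instance instRC : ∀ j : Idx m' k, CommRing (RC m' k n j)
  | .inl _ => inferInstanceAs (CommRing ℤ)
  | .inr i => inferInstanceAs (CommRing (ZMod (n i)))

/-- slot-1 coefficient (also slot 3) -/
def c1 : ∀ j : Idx m' k, VT m' k n → RC m' k n j
  | .inl t => fun v => v.1 (t + 1)
  | .inr _ => fun v => ((v.1 0 : ℤ) : ZMod _)

/-- slot-2 coefficient -/
def c2 : ∀ j : Idx m' k, VT m' k n → RC m' k n j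
  | .inl t => fun v => v.1 (t + 2)
  | .inr _ => fun v => ((v.1 1 : ℤ) : ZMod _)

/-- slot-4 (target) coefficient -/
def c4 : ∀ j : Idx m' k, VT m' k n → RC m' k n j
  | .inl t => fun v => v.1 t
  | .inr i => fun v => v.2 i

variable {m' k n} in
lemma c1_add (j : Idx m' k) (v w : VT m' k n) : c1 m' k n j (v + w) = c1 m' k n j v + c1 m' k n j w := by
  cases j <;> simp [c1] <;> rfl

variable {m' k n} in
lemma c2_add (j : Idx m' k) (v w : VT m' k n) : c2 m' k n j (v + w) = c2 m' k n j v + c2 m' k n j w := by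
  cases j <;> simp [c2] <;> rfl

variable {m' k n} in
lemma c4_add (j : Idx m' k) (v w : VT m' k n) : c4 m' k n j (v + w) = c4 m' k n j v + c4 m' k n j w := by
  cases j <;> simp [c4] <;> rfl

variable {m' k n} in
lemma c1_neg (j : Idx m' k) (v : VT m' k n) : c1 m' k n j (-v) = -c1 m' k n j v := by
  cases j <;> simp [c1] <;> rfl

variable {m' k n} in
lemma c2_neg (j : Idx m' k) (v : VT m' k n) : c2 m' k n j (-v) = -c2 m' k n j v := by
  cases j <;> simp [c2] <;> rfl

variable {m' k n} in
lemma c4_neg (j : Idx m' k) (v : VT m' k n) : c4 m' k n j (-v) = -c4 m' k n j v := by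
  cases j <;> simp [c4] <;> rfl

variable {m' k n} in
lemma c1_zero (j : Idx m' k) : c1 m' k n j 0 = 0 := by cases j <;> simp [c1] <;> rfl
variable {m' k n} in
lemma c2_zero (j : Idx m' k) : c2 m' k n j 0 = 0 := by cases j <;> simp [c2] <;> rfl
variable {m' k n} in
lemma c4_zero (j : Idx m' k) : c4 m' k n j 0 = 0 := by cases j <;> simp [c4] <;> rfl

/-- embedding of level-1 data into chain `j` -/
def piM (j : Idx m' k) (v : VT m' k n) : Matrix (Fin 5) (Fin 5) (RC m' k n j) :=
  single 0 1 (c1 m' k n j v) + single 2 3 (c1 m' k n j v)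
    + single 1 2 (c2 m' k n j v) + single 3 4 (c4 m' k n j v)

variable {m' k n} in
lemma piM_add (j : Idx m' k) (v w : VT m' k n) :
    piM m' k n j (v + w) = piM m' k n j v + piM m' k n j w := by
  simp only [piM, c1_add, c2_add, c4_add, single_add]
  abel

variable {m' k n} in
lemma piM_neg (j : Idx m' k) (v : VT m' k n) : piM m' k n j (-v) = -piM m' k n j v := by
  have h : ∀ (a b : Fin 5) (c : RC m' k n j), single a b (-c) = -single a b c := by
    intro a b c
    ext i j
    simp [single, Matrix.neg_apply]
    split <;> simp
  simp only [piM, c1_neg, c2_neg, c4_neg, h]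
  abel

variable {m' k n} in
lemma piM_zero (j : Idx m' k) : piM m' k n j 0 = 0 := by
  simp [piM, c1_zero, c2_zero, c4_zero]

variable {m' k n} in
lemma lev_piM (j : Idx m' k) (v : VT m' k n) : Lev 1 (piM m' k n j v) := by
  intro i j' hij
  simp only [piM, Matrix.add_apply]
  rw [Matrix.single_apply_of_ne, Matrix.single_apply_of_ne,
    Matrix.single_apply_of_ne, Matrix.single_apply_of_ne] <;>
    first
      | (rintro ⟨rfl, rfl⟩; revert hij; decide)
      | simp

/-- the carrier of the group `E` -/
def ECar := VT m' k n × ((j : Idx m' k) → {M : Matrix (Fin 5) (Fin 5) (RC m' k n j) // Lev 2 M})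

variable {m' k n}

/-- matrix picture of an element in chain `j` -/
def phi (a : ECar m' k n) (j : Idx m' k) : Matrix (Fin 5) (Fin 5) (RC m' k n j) :=
  piM m' k n j a.1 + (a.2 j).1

lemma lev_phi (a : ECar m' k n) (j : Idx m' k) : Lev 1 (phi a j) :=
  lev_add (lev_piM j a.1) (lev_mono (by omega) (a.2 j).2)

lemma phi_pow5 (a : ECar m' k n) (j : Idx m' k) :
    phi a j * phi a j * phi a j * phi a j * phi a j = 0 := by
  have h := lev_phi a j
  exact lev_five (lev_mul (lev_mul (lev_mul (lev_mul h h) h) h) h)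

/-- group multiplication -/
def emul (a b : ECar m' k n) : ECar m' k n :=
  ⟨a.1 + b.1, fun j => ⟨(a.2 j).1 + (b.2 j).1 + phi a j * phi b j,
    lev_add (lev_add (a.2 j).2 (b.2 j).2) (lev_mul (lev_phi a j) (lev_phi b j))⟩⟩

/-- group identity -/
def eone : ECar m' k n := ⟨0, fun _ => ⟨0, lev_zero 2⟩⟩

/-- group inverse -/
def einv (a : ECar m' k n) : ECar m' k n :=
  ⟨-a.1, fun j => ⟨-(a.2 j).1 + phi a j * phi a j
      + -(phi a j * phi a j * phi a j) + phi a j * phi a j * phi a j * phi a j,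
    by
      have h := lev_phi a j
      exact lev_add (lev_add (lev_add (lev_neg (a.2 j).2) (lev_mul h h))
        (lev_neg (lev_mono (by omega) (lev_mul (lev_mul h h) h))))
        (lev_mono (by omega) (lev_mul (lev_mul (lev_mul h h) h) h))⟩⟩

lemma phi_emul (a b : ECar m' k n) (j : Idx m' k) :
    phi (emul a b) j = phi a j + phi b j + phi a j * phi b j := by
  simp only [phi, emul, piM_add]
  abel

lemma phi_eone (j : Idx m' k) : phi (eone : ECar m' k n) j = 0 := by
  simp [phi, eone, piM_zero]

lemma phi_einv (a : ECar m' k n) (j : Idx m' k) :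
    phi (einv a) j = -phi a j + phi a j * phi a j
      + -(phi a j * phi a j * phi a j) + phi a j * phi a j * phi a j * phi a j := by
  simp only [phi, einv, piM_neg]
  abel

lemma emul_assoc (a b c : ECar m' k n) : emul (emul a b) c = emul a (emul b c) := by
  refine Prod.ext (add_assoc _ _ _) (funext fun j => Subtype.ext ?_)
  show ((emul a b).2 j).1 + (c.2 j).1 + phi (emul a b) j * phi c j
      = (a.2 j).1 + ((emul b c).2 j).1 + phi a j * phi (emul b c) j
  have h1 : ((emul a b).2 j).1 = (a.2 j).1 + (b.2 j).1 + phi a j * phi b j := rfl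
  have h2 : ((emul b c).2 j).1 = (b.2 j).1 + (c.2 j).1 + phi b j * phi c j := rfl
  rw [h1, h2, phi_emul, phi_emul]
  noncomm_ring

lemma eone_emul (a : ECar m' k n) : emul eone a = a := by
  refine Prod.ext (zero_add _) (funext fun j => Subtype.ext ?_)
  show ((eone : ECar m' k n).2 j).1 + (a.2 j).1 + phi eone j * phi a j = (a.2 j).1
  rw [phi_eone]
  show 0 + (a.2 j).1 + 0 * phi a j = (a.2 j).1
  simp

lemma emul_eone (a : ECar m' k n) : emul a eone = a := by
  refine Prod.ext (add_zero _) (funext fun j => Subtype.ext ?_)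
  show (a.2 j).1 + ((eone : ECar m' k n).2 j).1 + phi a j * phi eone j = (a.2 j).1
  rw [phi_eone]
  show (a.2 j).1 + 0 + phi a j * 0 = (a.2 j).1
  simp

lemma einv_emul (a : ECar m' k n) : emul (einv a) a = eone := by
  refine Prod.ext (neg_add_cancel _) (funext fun j => Subtype.ext ?_)
  show ((einv a).2 j).1 + (a.2 j).1 + phi (einv a) j * phi a j = ((eone : ECar m' k n).2 j).1
  have h1 : ((einv a).2 j).1 = -(a.2 j).1 + phi a j * phi a j
      + -(phi a j * phi a j * phi a j) + phi a j * phi a j * phi a j * phi a j := rfl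
  have h2 : ((eone : ECar m' k n).2 j).1 = 0 := rfl
  rw [h1, h2, phi_einv]
  have h5 := phi_pow5 a j
  set p := phi a j
  calc -(a.2 j).1 + p * p + -(p * p * p) + p * p * p * p + (a.2 j).1
        + (-p + p * p + -(p * p * p) + p * p * p * p) * p
      = p * p * p * p * p := by noncomm_ring
    _ = 0 := h5

instance instGroupECar : Group (ECar m' k n) where
  mul := emul
  one := eone
  inv := einv
  mul_assoc := emul_assoc
  one_mul := eone_emul
  mul_one := emul_eone
  inv_mul_cancel := einv_emul

lemma mul_def (a b : ECar m' k n) : a * b = emul a b := rfl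
lemma inv_def (a : ECar m' k n) : a⁻¹ = einv a := rfl
lemma one_def : (1 : ECar m' k n) = eone := rfl

lemma phi_mul (a b : ECar m' k n) (j : Idx m' k) :
    phi (a * b) j = phi a j + phi b j + phi a j * phi b j := phi_emul a b j

lemma phi_one (j : Idx m' k) : phi (1 : ECar m' k n) j = 0 := phi_eone j

lemma phi_inv (a : ECar m' k n) (j : Idx m' k) :
    phi a⁻¹ j = -phi a j + phi a j * phi a j
      + -(phi a j * phi a j * phi a j) + phi a j * phi a j * phi a j * phi a j := phi_einv a j


section Sufficiency
variable {m' k : ℕ} {n : Fin k → ℕ}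

lemma commute_of_phi (s t : ECar m' k n)
    (h : ∀ j, phi s j * phi t j = phi t j * phi s j) : Commute s t := by
  show s * t = t * s
  refine Prod.ext (add_comm _ _) (funext fun j => Subtype.ext ?_)
  show (s.2 j).1 + (t.2 j).1 + phi s j * phi t j
      = (t.2 j).1 + (s.2 j).1 + phi t j * phi s j
  rw [h j]
  abel

lemma lev_phi_pcomm (g h : ECar m' k n) (j : Idx m' k) (α β : ℕ)
    (hg : Lev α (phi g j)) (hh : Lev β (phi h j)) :
    Lev (α + β) (phi (pcomm g h) j) := by
  have hgid : (h * g) * pcomm g h = g * h := by unfold pcomm; group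
  have h1 := congrArg (fun s : ECar m' k n => phi s j) hgid
  simp only [phi_mul] at h1
  set w := phi (pcomm g h) j with hw
  set A := phi h j + phi g j + phi h j * phi g j with hA
  have hEq : w = (phi g j * phi h j - phi h j * phi g j) - A * w := by
    calc w = (A + w + A * w) - A - A * w := by abel
      _ = (phi g j + phi h j + phi g j * phi h j) - A - A * w := by rw [h1]
      _ = (phi g j * phi h j - phi h j * phi g j) - A * w := by rw [hA]; abel
  have hlevA : Lev 1 A := by
    rw [hA]
    exact lev_add (lev_add (lev_phi h j) (lev_phi g j))
      (lev_mono (by omega) (lev_mul (lev_phi h j) (lev_phi g j)))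
  have key : ∀ γ : ℕ, γ ≤ α + β → Lev γ w := by
    intro γ
    induction γ with
    | zero => intro _; exact lev_mono (Nat.zero_le 1) (lev_phi _ j)
    | succ γ ih =>
      intro hγ
      have hwγ := ih (by omega)
      rw [hEq]
      refine lev_sub (lev_mono hγ (lev_sub (lev_mul hg hh) (lev_mono (by omega) (lev_mul hh hg)))) ?_
      have := lev_mul hlevA hwγ
      rwa [Nat.add_comm 1 γ] at this
  exact key _ le_rfl

lemma suff_marginal (a : ECar m' k n) (h0 : a.1 = 0) :
    a ∈ s2MarginalSet (ECar m' k n) := by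
  apply marginal_of_commute
  intro g p q
  apply commute_of_phi
  intro j
  have ha2 : Lev 2 (phi a j) := by
    have : phi a j = (a.2 j).1 := by
      rw [phi, h0, piM_zero, zero_add]
    rw [this]; exact (a.2 j).2
  have h1 : Lev 3 (phi (pcomm g a) j) := lev_phi_pcomm g a j 1 2 (lev_phi g j) ha2
  have h2 : Lev 2 (phi (pcomm p q) j) :=
    lev_phi_pcomm p q j 1 1 (lev_phi p j) (lev_phi q j)
  have z1 : phi (pcomm g a) j * phi (pcomm p q) j = 0 := lev_five (lev_mul h1 h2)
  have z2 : phi (pcomm p q) j * phi (pcomm g a) j = 0 := by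
    have := lev_mul h2 h1
    exact lev_five this
  rw [z1, z2]

end Sufficiency


section Necessity
variable {m' k : ℕ} {n : Fin k → ℕ}

/-! Fin facts -/
lemma fin_a12 (t : Fin (m'+3)) : t + 1 ≠ t + 2 := by
  intro h
  have h2 : (1 : Fin (m'+3)) = 2 := add_left_cancel h
  have := congrArg Fin.val h2
  simp [Fin.val_one, Fin.val_two] at this
  rw [Nat.mod_eq_of_lt (by omega)] at this; omega

lemma fin_a1 (t : Fin (m'+3)) : t + 1 ≠ t := by
  intro h
  have h2 : (1 : Fin (m'+3)) = 0 := by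
    have := congrArg (fun s => s - t) h
    simpa using this
  have := congrArg Fin.val h2
  simp [Fin.val_one] at this

lemma fin_a2 (t : Fin (m'+3)) : t + 2 ≠ t := by
  intro h
  have h2 : (2 : Fin (m'+3)) = 0 := by
    have := congrArg (fun s => s - t) h
    simpa using this
  have := congrArg Fin.val h2
  simp [Fin.val_two] at this
  rw [Nat.mod_eq_of_lt (by omega)] at this; omega

lemma fin_01 : (0 : Fin (m'+3)) ≠ 1 := by
  intro h
  have := congrArg Fin.val h
  simp [Fin.val_one] at this

/-- the slot-1 certificate generator of chain `j` -/
def genX : Idx m' k → ECar m' k n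
  | .inl t => ⟨(Pi.single (t+1) 1, 0), fun _ => ⟨0, lev_zero 2⟩⟩
  | .inr _ => ⟨(Pi.single 0 1, 0), fun _ => ⟨0, lev_zero 2⟩⟩

/-- the slot-2 certificate generator of chain `j` -/
def genY : Idx m' k → ECar m' k n
  | .inl t => ⟨(Pi.single (t+2) 1, 0), fun _ => ⟨0, lev_zero 2⟩⟩
  | .inr _ => ⟨(Pi.single 1 1, 0), fun _ => ⟨0, lev_zero 2⟩⟩

lemma phi_genX (j : Idx m' k) :
    phi (genX j : ECar m' k n) j
      = single 0 1 (1 : RC m' k n j) + single 2 3 1 := by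
  cases j with
  | inl t =>
      simp only [phi, genX, piM, c1, c2, c4, add_zero]
      rw [Pi.single_eq_same, Pi.single_eq_of_ne (fin_a12 t).symm,
        Pi.single_eq_of_ne (fin_a1 t).symm]
      erw [Matrix.single_zero, Matrix.single_zero, add_zero, add_zero]
      rfl
  | inr i =>
      simp only [phi, genX, piM, c1, c2, c4, add_zero]
      rw [Pi.single_eq_same, Pi.single_eq_of_ne fin_01.symm]
      erw [Int.cast_zero, Int.cast_one, Matrix.single_zero, Matrix.single_zero, add_zero, add_zero]
      rfl

lemma phi_genY (j : Idx m' k) :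
    phi (genY j : ECar m' k n) j = single 1 2 (1 : RC m' k n j) := by
  cases j with
  | inl t =>
      simp only [phi, genY, piM, c1, c2, c4, add_zero]
      rw [Pi.single_eq_same, Pi.single_eq_of_ne (fin_a12 t),
        Pi.single_eq_of_ne (fin_a2 t).symm]
      erw [Matrix.single_zero, Matrix.single_zero, Matrix.single_zero, add_zero, zero_add]
      rfl
  | inr i =>
      simp only [phi, genY, piM, c1, c2, c4, add_zero]
      rw [Pi.single_eq_same, Pi.single_eq_of_ne fin_01]
      erw [Int.cast_zero, Int.cast_one, Matrix.single_zero, Matrix.single_zero, Matrix.single_zero, add_zero, zero_add, zero_add]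
      rfl


/-! entry computations -/

section Entries
variable {R : Type} [CommRing R]

/-- the matrix `e₁₂ + e₃₄` (0-indexed: positions (0,1) and (2,3)) -/
def pmat (R : Type) [CommRing R] : Matrix (Fin 5) (Fin 5) R :=
  single 0 1 1 + single 2 3 1

/-- the matrix `e₁₃ + e₁₄ - e₂₄` (0-indexed (0,2),(0,3),(1,3)) -/
def cmat (R : Type) [CommRing R] : Matrix (Fin 5) (Fin 5) R :=
  single 0 2 1 + single 0 3 1 - single 1 3 1

lemma lev_pmat : Lev 1 (pmat R) := by
  intro i j hij
  simp only [pmat, Matrix.add_apply]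
  rw [Matrix.single_apply_of_ne, Matrix.single_apply_of_ne] <;>
    first
      | (rintro ⟨rfl, rfl⟩; revert hij; decide)
      | simp

lemma pmat_apply (a b : Fin 5) :
    pmat R a b = if a = 0 ∧ b = 1 then 1 else if a = 2 ∧ b = 3 then 1 else 0 := by
  fin_cases a <;> fin_cases b <;> simp [pmat, Matrix.add_apply] <;> rfl

lemma pmul0 (M : Matrix (Fin 5) (Fin 5) R) (b : Fin 5) : (pmat R * M) 0 b = M 1 b := by
  simp [pmat, Matrix.add_mul]

lemma pmul2 (M : Matrix (Fin 5) (Fin 5) R) (b : Fin 5) : (pmat R * M) 2 b = M 3 b := by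
  simp [pmat, Matrix.add_mul]

lemma pmul3 (M : Matrix (Fin 5) (Fin 5) R) (b : Fin 5) : (pmat R * M) 3 b = 0 := by
  simp [pmat, Matrix.add_mul]

lemma mulp4 (M : Matrix (Fin 5) (Fin 5) R) (a : Fin 5) : (M * pmat R) a 4 = 0 := by
  simp [pmat, Matrix.mul_add]

lemma mulp3 (M : Matrix (Fin 5) (Fin 5) R) (a : Fin 5) : (M * pmat R) a 3 = M a 2 := by
  simp [pmat, Matrix.mul_add]

lemma dcalc (mb m0 d : Matrix (Fin 5) (Fin 5) R)
    (hmb : Lev 1 mb) (hm0 : Lev 1 m0)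
    (hrel : mb + m0 + mb * m0 = 0)
    (hd : d = -pmat R + mb + (-pmat R) * mb + pmat R
        + (-pmat R + mb + (-pmat R) * mb) * pmat R + m0
        + (-pmat R + mb + (-pmat R) * mb + pmat R
            + (-pmat R + mb + (-pmat R) * mb) * pmat R) * m0) :
    d 2 4 + d 3 4 = -(mb 3 4) := by
  set A : Matrix (Fin 5) (Fin 5) R := -pmat R + mb + (-pmat R) * mb with hA
  set S : Matrix (Fin 5) (Fin 5) R := A + pmat R + A * pmat R with hS
  have hdS : d = S + m0 + S * m0 := hd
  have hALev : Lev 1 A := by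
    rw [hA]
    exact lev_add (lev_add (lev_neg lev_pmat) hmb)
      (lev_mono (by omega) (lev_mul (lev_neg lev_pmat) hmb))
  have hSLev : Lev 1 S := by
    rw [hS]
    exact lev_add (lev_add hALev lev_pmat)
      (lev_mono (by omega) (lev_mul hALev lev_pmat))
  -- entries of A
  have hA23 : A 2 3 = -1 + mb 2 3 := by
    rw [hA]
    simp only [Matrix.add_apply, Matrix.neg_apply, Matrix.neg_mul, pmul2]
    rw [pmat_apply, hmb 3 3 (by decide)]
    simp
  have hA24 : A 2 4 = mb 2 4 - mb 3 4 := by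
    rw [hA]
    simp only [Matrix.add_apply, Matrix.neg_apply, Matrix.neg_mul, pmul2]
    rw [pmat_apply]
    simp
    ring
  have hA34 : A 3 4 = mb 3 4 := by
    rw [hA]
    simp only [Matrix.add_apply, Matrix.neg_apply, Matrix.neg_mul, pmul3]
    rw [pmat_apply]
    simp
  have hA22 : A 2 2 = 0 := hALev 2 2 (by decide)
  -- entries of S
  have hS23 : S 2 3 = mb 2 3 := by
    rw [hS]
    simp only [Matrix.add_apply, mulp3]
    rw [hA23, hA22, pmat_apply]
    simp
  have hS24 : S 2 4 = mb 2 4 - mb 3 4 := by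
    rw [hS]
    simp only [Matrix.add_apply, mulp4]
    rw [hA24, pmat_apply]
    simp
  have hS34 : S 3 4 = mb 3 4 := by
    rw [hS]
    simp only [Matrix.add_apply, mulp4]
    rw [hA34, pmat_apply]
    simp
  -- products with m0
  have hSm24 : (S * m0) 2 4 = mb 2 3 * m0 3 4 := by
    rw [Matrix.mul_apply, Fin.sum_univ_five]
    rw [hSLev 2 0 (by decide), hSLev 2 1 (by decide), hSLev 2 2 (by decide),
      hS23, hm0 4 4 (by decide)]
    ring
  have hSm34 : (S * m0) 3 4 = 0 := by
    rw [Matrix.mul_apply, Fin.sum_univ_five]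
    rw [hSLev 3 0 (by decide), hSLev 3 1 (by decide), hSLev 3 2 (by decide),
      hSLev 3 3 (by decide), hm0 4 4 (by decide)]
    ring
  have hmm24 : (mb * m0) 2 4 = mb 2 3 * m0 3 4 := by
    rw [Matrix.mul_apply, Fin.sum_univ_five]
    rw [hmb 2 0 (by decide), hmb 2 1 (by decide), hmb 2 2 (by decide),
      hm0 4 4 (by decide)]
    ring
  have hmm34 : (mb * m0) 3 4 = 0 := by
    rw [Matrix.mul_apply, Fin.sum_univ_five]
    rw [hmb 3 0 (by decide), hmb 3 1 (by decide), hmb 3 2 (by decide),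
      hmb 3 3 (by decide), hm0 4 4 (by decide)]
    ring
  have h24 : mb 2 4 + m0 2 4 + mb 2 3 * m0 3 4 = 0 := by
    have := congrFun (congrFun hrel 2) 4
    simpa [Matrix.add_apply, hmm24] using this
  have h34 : mb 3 4 + m0 3 4 = 0 := by
    have := congrFun (congrFun hrel 3) 4
    simpa [Matrix.add_apply, hmm34] using this
  have hd24 : d 2 4 = S 2 4 + m0 2 4 + (S * m0) 2 4 := by
    rw [hdS]; simp [Matrix.add_apply]
  have hd34 : d 3 4 = S 3 4 + m0 3 4 + (S * m0) 3 4 := by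
    rw [hdS]; simp [Matrix.add_apply]
  rw [hd24, hd34, hS24, hS34, hSm24, hSm34]
  linear_combination h24 + h34

lemma cmat_mul_apply04 (d : Matrix (Fin 5) (Fin 5) R) :
    (cmat R * d) 0 4 = d 2 4 + d 3 4 := by
  simp [cmat, Matrix.sub_mul, Matrix.add_mul, Matrix.sub_apply, Matrix.add_apply]

lemma mul_cmat_apply04 (d : Matrix (Fin 5) (Fin 5) R) :
    (d * cmat R) 0 4 = 0 := by
  simp [cmat, Matrix.mul_sub, Matrix.mul_add, Matrix.sub_apply, Matrix.add_apply]

lemma Bmul (a b c d : Fin 5) :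
    (single a b (1:R)) * single c d (1:R)
      = if b = c then single a d 1 else 0 := by
  by_cases h : b = c
  · subst h; simp
  · rw [Matrix.single_mul_single_of_ne (c := (1:R)) a b c h (1:R)]
    simp [h]

end Entries


lemma mul_snd_val (a b : ECar m' k n) (j : Idx m' k) :
    ((a * b).2 j).1 = (a.2 j).1 + (b.2 j).1 + phi a j * phi b j := rfl

lemma inv_fst (a : ECar m' k n) : (a⁻¹).1 = -a.1 := rfl

lemma phi_entry34 (b : ECar m' k n) (j : Idx m' k) :
    phi b j 3 4 = c4 m' k n j b.1 := by
  have h2 : ((b.2 j).1) 3 4 = 0 := (b.2 j).2 3 4 (by decide)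
  simp only [phi, Matrix.add_apply, h2, add_zero, piM]
  simp [Matrix.single]

lemma nec_c4 (a : ECar m' k n) (ha : a ∈ s2MarginalSet (ECar m' k n)) (j : Idx m' k) :
    c4 m' k n j a.1 = 0 := by
  have hM := (ha (genX j) (genY j) (genX j) 1).2.2.2
  rw [one_mul] at hM
  have hone : metaW (genX j) (genY j) (genX j) (1 : ECar m' k n) = 1 := by
    unfold metaW
    rw [pcomm_one, pcomm_one]
  have hw : pcomm (pcomm (genX j) (genY j)) (pcomm (genX j) a) = 1 := hM.trans hone
  have hcm := commute_of_pcomm_eq_one hw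
  set C := pcomm (genX j) (genY j) with hC
  set D := pcomm (genX j) a with hD
  -- matrix-level commutation
  have h1 : (C.2 j).1 + (D.2 j).1 + phi C j * phi D j
      = (D.2 j).1 + (C.2 j).1 + phi D j * phi C j := by
    have := congrArg (fun s : ECar m' k n => (s.2 j).1) hcm
    simpa only [mul_snd_val] using this
  rw [add_comm ((D.2 j).1) ((C.2 j).1)] at h1
  have hmat := add_left_cancel h1
  -- explicit matrices
  have hpv : phi (genX j : ECar m' k n) j = pmat (RC m' k n j) := phi_genX j
  have hrv : phi (genY j : ECar m' k n) j = single 1 2 1 := phi_genY j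
  have hp2 : pmat (RC m' k n j) * pmat (RC m' k n j) = 0 := by
    simp [pmat, Matrix.add_mul, Matrix.mul_add]
  have hr2 : (single 1 2 1 : Matrix (Fin 5) (Fin 5) (RC m' k n j))
      * single 1 2 1 = 0 := by
    simp
  have hXi : phi ((genX j : ECar m' k n))⁻¹ j = -pmat (RC m' k n j) := by
    rw [phi_inv, hpv, hp2]
    simp
  have hYi : phi ((genY j : ECar m' k n))⁻¹ j
      = -(single 1 2 1) := by
    rw [phi_inv, hrv, hr2]
    simp
  have hcval : phi C j = cmat (RC m' k n j) := by
    rw [hC]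
    show phi ((genX j)⁻¹ * (genY j)⁻¹ * genX j * genY j) j = _
    rw [phi_mul, phi_mul, phi_mul, hXi, hYi, hpv, hrv]
    simp [pmat, cmat, Matrix.add_mul, Matrix.mul_add, Matrix.neg_mul, Matrix.mul_neg,
      neg_add_rev, neg_neg, Bmul]
    abel
  -- the d matrix
  have hmbLev : Lev 1 (phi (a⁻¹) j) := lev_phi _ j
  have hm0Lev : Lev 1 (phi a j) := lev_phi a j
  have hrel : phi (a⁻¹) j + phi a j + phi (a⁻¹) j * phi a j = 0 := by
    have := phi_mul (a⁻¹) a j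
    rw [inv_mul_cancel, phi_one] at this
    exact this.symm
  have hdval : phi D j = -pmat (RC m' k n j) + phi (a⁻¹) j
      + (-pmat (RC m' k n j)) * phi (a⁻¹) j + pmat (RC m' k n j)
      + (-pmat (RC m' k n j) + phi (a⁻¹) j + (-pmat (RC m' k n j)) * phi (a⁻¹) j)
        * pmat (RC m' k n j) + phi a j
      + (-pmat (RC m' k n j) + phi (a⁻¹) j + (-pmat (RC m' k n j)) * phi (a⁻¹) j
          + pmat (RC m' k n j)
          + (-pmat (RC m' k n j) + phi (a⁻¹) j + (-pmat (RC m' k n j)) * phi (a⁻¹) j)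
            * pmat (RC m' k n j)) * phi a j := by
    rw [hD]
    show phi ((genX j)⁻¹ * a⁻¹ * genX j * a) j = _
    rw [phi_mul, phi_mul, phi_mul, hXi, hpv]
  have hdsum : phi D j 2 4 + phi D j 3 4 = -(phi (a⁻¹) j 3 4) :=
    dcalc (phi (a⁻¹) j) (phi a j) (phi D j) hmbLev hm0Lev hrel hdval
  -- extract entry (0,4)
  have h04 := congrFun (congrFun hmat 0) 4
  rw [hcval] at h04
  rw [cmat_mul_apply04, mul_cmat_apply04] at h04
  -- conclude
  have hmb34 : phi (a⁻¹) j 3 4 = 0 := by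
    have h0 := h04.symm.trans hdsum
    exact neg_eq_zero.mp h0.symm
  have := phi_entry34 (a⁻¹) j
  rw [hmb34] at this
  have h4 : c4 m' k n j ((a⁻¹).1) = 0 := this.symm
  rw [inv_fst, c4_neg] at h4
  exact neg_eq_zero.mp h4

end Necessity


section Assembly
variable {m' k : ℕ} {n : Fin k → ℕ}

/-- projection onto the abelianization -/
def projHom : ECar m' k n →* Multiplicative (VT m' k n) where
  toFun a := Multiplicative.ofAdd a.1
  map_one' := rfl
  map_mul' _ _ := rfl

lemma projHom_surj : Function.Surjective (projHom (m' := m') (k := k) (n := n)) :=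
  fun v => ⟨⟨v.toAdd, fun _ => ⟨0, lev_zero 2⟩⟩, rfl⟩

lemma mem_ker_iff (a : ECar m' k n) :
    a ∈ (projHom (m' := m') (k := k) (n := n)).ker ↔ a.1 = 0 := by
  rw [MonoidHom.mem_ker]
  show Multiplicative.ofAdd a.1 = 1 ↔ a.1 = 0
  exact ofAdd_eq_one

lemma fst_eq_zero_of_c4 (a : ECar m' k n) (h : ∀ j, c4 m' k n j a.1 = 0) :
    a.1 = 0 := by
  refine Prod.ext ?_ ?_
  · funext t
    exact h (.inl t)
  · funext i
    exact h (.inr i)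

lemma ker_eq_marginal :
    (((projHom (m' := m') (k := k) (n := n)).ker : Subgroup (ECar m' k n)) : Set (ECar m' k n))
      = s2MarginalSet (ECar m' k n) := by
  ext a
  rw [SetLike.mem_coe, mem_ker_iff]
  constructor
  · intro h
    exact suff_marginal a h
  · intro h
    exact fst_eq_zero_of_c4 a (fun j => nec_c4 a h j)

end Assembly

end S2Cap

/-- If an infinite finitely generated abelian group `ℤ^(m) ⊕ ℤ_{n_1} ⊕ … ⊕ ℤ_{n_k}`
(each `n_i ≥ 2`, `n_{i+1} ∣ n_i`) has `m ≥ 3`, then it is `S_2`-capable. -/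
theorem s2Capable_infinite_fg_abelian_sufficient (G : Type) [Group G]
    (m k : ℕ) (n : Fin k → ℕ)
    (hn : ∀ i : Fin k, 2 ≤ n i)
    (hdvd : ∀ i : Fin k, ∀ h : (i : ℕ) + 1 < k, n ⟨(i : ℕ) + 1, h⟩ ∣ n i)
    (hG : Nonempty (G ≃* Multiplicative ((Fin m → ℤ) × ((i : Fin k) → ZMod (n i)))))
    (hm : 3 ≤ m) :
    IsS2Capable G := by
  obtain ⟨m'', rfl⟩ : ∃ m'', m = m'' + 3 := ⟨m - 3, by omega⟩
  obtain ⟨e⟩ := hG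
  refine ⟨S2Cap.ECar m'' k n, S2Cap.instGroupECar,
    (S2Cap.projHom (m' := m'') (k := k) (n := n)).ker, MonoidHom.normal_ker _,
    S2Cap.ker_eq_marginal, ⟨e.trans (QuotientGroup.quotientKerEquivOfSurjective _
      S2Cap.projHom_surj).symm⟩⟩
end

section
/- Let G be a finite abelian group isomorphic to ℤ_{n_1} ⊕ … ⊕ ℤ_{n_k}, where k ≥ 1, each n_i ≥ 2, and n_{i+1} divides n_i for all 1 ≤ i ≤ k−1. Then G is N_{2,1}-capable if and only if k ≥ 2 and n_1 = n_2. -/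
/-- The word `v(x₁,…,x₆) = [[[x₁,x₂],x₃],[[x₄,x₅],x₆]]` defining the polynilpotent
variety `N_{2,1}`. -/
def n21W {E : Type} [Group E] (g : Fin 6 → E) : E :=
  pcomm (pcomm (pcomm (g 0) (g 1)) (g 2)) (pcomm (pcomm (g 3) (g 4)) (g 5))

/-- The marginal set of a group `E` with respect to the variety `N_{2,1}`: all `a ∈ E`
such that for all `g₁,…,g₆ ∈ E` and every index `i`, replacing `gᵢ` by `gᵢ * a`
leaves the value of `v` unchanged. -/
def n21MarginalSet (E : Type) [Group E] : Set E :=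
  {a : E | ∀ (g : Fin 6 → E) (i : Fin 6),
    n21W (Function.update g i (g i * a)) = n21W g}

/-- `G` is `N_{2,1}`-capable if `G ≅ E / V*(E)` for some group `E`, where `V*(E)` is the
marginal (normal) subgroup of `E` with respect to the variety `N_{2,1}`, i.e. the normal
subgroup whose underlying set is `n21MarginalSet E`. -/
def IsN21Capable (G : Type) [Group G] : Prop :=
  ∃ (E : Type) (_ : Group E) (H : Subgroup E) (_ : H.Normal),
    (H : Set E) = n21MarginalSet E ∧ Nonempty (G ≃* E ⧸ H)

namespace N21
variable {E : Type} [Group E]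

@[simp] lemma pcomm_one_left (b : E) : pcomm 1 b = 1 := by simp [pcomm]
@[simp] lemma pcomm_one_right (a : E) : pcomm a 1 = 1 := by simp [pcomm]
@[simp] lemma pcomm_self (a : E) : pcomm a a = 1 := by simp [pcomm]
lemma pcomm_inv_rev (a b : E) : (pcomm a b)⁻¹ = pcomm b a := by simp [pcomm]; group
lemma pcomm_mul_left (a b c : E) : pcomm (a*b) c = b⁻¹ * pcomm a c * b * pcomm b c := by
  simp [pcomm]; group
lemma pcomm_mul_right (a b c : E) : pcomm a (b*c) = pcomm a c * (c⁻¹ * pcomm a b * c) := by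
  simp [pcomm]; group
lemma pcomm_conj_left (a w c : E) : pcomm (w⁻¹*a*w) c = w⁻¹ * pcomm a (w*c*w⁻¹) * w := by
  simp [pcomm]; group
lemma conj_eq_mul_pcomm (a x : E) : x⁻¹ * a * x = a * pcomm a x := by
  simp [pcomm]; group

lemma conjC (d e f x : E) :
    x⁻¹ * pcomm (pcomm d e) f * x
      = pcomm (pcomm (x⁻¹*d*x) (x⁻¹*e*x)) (x⁻¹*f*x) := by
  simp [pcomm]; group

def mk6 (a b c d e f : E) : Fin 6 → E := ![a,b,c,d,e,f]

lemma n21W_mk6 (a b c d e f : E) :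
    n21W (mk6 a b c d e f) = pcomm (pcomm (pcomm a b) c) (pcomm (pcomm d e) f) := rfl

lemma eq_mk6 (g : Fin 6 → E) : g = mk6 (g 0) (g 1) (g 2) (g 3) (g 4) (g 5) := by
  funext i; fin_cases i <;> rfl

lemma upd0 (a b c d e f x : E) : Function.update (mk6 a b c d e f) 0 x = mk6 x b c d e f := by
  funext i; fin_cases i <;> rfl
lemma upd1 (a b c d e f x : E) : Function.update (mk6 a b c d e f) 1 x = mk6 a x c d e f := by
  funext i; fin_cases i <;> rfl
lemma upd2 (a b c d e f x : E) : Function.update (mk6 a b c d e f) 2 x = mk6 a b x d e f := by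
  funext i; fin_cases i <;> rfl
lemma upd3 (a b c d e f x : E) : Function.update (mk6 a b c d e f) 3 x = mk6 a b c x e f := by
  funext i; fin_cases i <;> rfl
lemma upd4 (a b c d e f x : E) : Function.update (mk6 a b c d e f) 4 x = mk6 a b c d x f := by
  funext i; fin_cases i <;> rfl
lemma upd5 (a b c d e f x : E) : Function.update (mk6 a b c d e f) 5 x = mk6 a b c d e x := by
  funext i; fin_cases i <;> rfl

lemma n21W_swap (a b c d e f : E) :
    n21W (mk6 a b c d e f) = (n21W (mk6 d e f a b c))⁻¹ := by
  rw [n21W_mk6, n21W_mk6, pcomm_inv_rev]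

lemma n21W_conj (g : Fin 6 → E) (w : E) :
    w⁻¹ * n21W g * w = n21W (fun i => w⁻¹ * g i * w) := by
  simp only [n21W, pcomm]; group

@[simp] lemma n21W_one0 (b c d e f : E) : n21W (mk6 1 b c d e f) = 1 := by
  rw [n21W_mk6]; simp
@[simp] lemma n21W_one1 (a c d e f : E) : n21W (mk6 a 1 c d e f) = 1 := by
  rw [n21W_mk6]; simp
@[simp] lemma n21W_one2 (a b d e f : E) : n21W (mk6 a b 1 d e f) = 1 := by
  rw [n21W_mk6]; simp
@[simp] lemma n21W_one3 (a b c e f : E) : n21W (mk6 a b c 1 e f) = 1 := by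
  rw [n21W_mk6]; simp
@[simp] lemma n21W_one4 (a b c d f : E) : n21W (mk6 a b c d 1 f) = 1 := by
  rw [n21W_mk6]; simp
@[simp] lemma n21W_one5 (a b c d e : E) : n21W (mk6 a b c d e 1) = 1 := by
  rw [n21W_mk6]; simp

@[simp] lemma n21W_eq01 (a c d e f : E) : n21W (mk6 a a c d e f) = 1 := by
  rw [n21W_mk6]; simp
@[simp] lemma n21W_eq34 (a b c d f : E) : n21W (mk6 a b c d d f) = 1 := by
  rw [n21W_mk6]; simp

section Abstract
variable {H : Subgroup E}
  (hmar : ∀ a ∈ H, ∀ (g : Fin 6 → E) (i : Fin 6),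
      n21W (Function.update g i (g i * a)) = n21W g)
  (hcomm : ∀ x y : E, pcomm x y ∈ H)

include hmar hcomm

lemma margin_update {a : E} (ha : a ∈ H) (g : Fin 6 → E) (i : Fin 6) (x : E) :
    n21W (Function.update g i (x * a)) = n21W (Function.update g i x) := by
  have h := hmar a ha (Function.update g i x) i
  rwa [Function.update_self, Function.update_idem] at h

lemma congr_step {a a' : E} (ha : a⁻¹ * a' ∈ H) (b c d e f : E) :
    n21W (mk6 a' b c d e f) = n21W (mk6 a b c d e f) := by
  have h := margin_update hmar hcomm ha (mk6 a b c d e f) 0 a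
  rw [mul_inv_cancel_left, upd0, upd0] at h
  exact h

lemma congr_step1 {b b' : E} (hb : b⁻¹ * b' ∈ H) (a c d e f : E) :
    n21W (mk6 a b' c d e f) = n21W (mk6 a b c d e f) := by
  have h := margin_update hmar hcomm hb (mk6 a b c d e f) 1 b
  rw [mul_inv_cancel_left, upd1, upd1] at h
  exact h

lemma congr_step2 {c c' : E} (hc : c⁻¹ * c' ∈ H) (a b d e f : E) :
    n21W (mk6 a b c' d e f) = n21W (mk6 a b c d e f) := by
  have h := margin_update hmar hcomm hc (mk6 a b c d e f) 2 c
  rw [mul_inv_cancel_left, upd2, upd2] at h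
  exact h

lemma congr_step3 {d d' : E} (hd : d⁻¹ * d' ∈ H) (a b c e f : E) :
    n21W (mk6 a b c d' e f) = n21W (mk6 a b c d e f) := by
  have h := margin_update hmar hcomm hd (mk6 a b c d e f) 3 d
  rw [mul_inv_cancel_left, upd3, upd3] at h
  exact h

lemma congr_step4 {e e' : E} (he : e⁻¹ * e' ∈ H) (a b c d f : E) :
    n21W (mk6 a b c d e' f) = n21W (mk6 a b c d e f) := by
  have h := margin_update hmar hcomm he (mk6 a b c d e f) 4 e
  rw [mul_inv_cancel_left, upd4, upd4] at h
  exact h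

lemma congr_step5 {f f' : E} (hf : f⁻¹ * f' ∈ H) (a b c d e : E) :
    n21W (mk6 a b c d e f') = n21W (mk6 a b c d e f) := by
  have h := margin_update hmar hcomm hf (mk6 a b c d e f) 5 f
  rw [mul_inv_cancel_left, upd5, upd5] at h
  exact h

lemma congr6 {a a' b b' c c' d d' e e' f f' : E}
    (ha : a⁻¹ * a' ∈ H) (hb : b⁻¹ * b' ∈ H) (hc : c⁻¹ * c' ∈ H)
    (hd : d⁻¹ * d' ∈ H) (he : e⁻¹ * e' ∈ H) (hf : f⁻¹ * f' ∈ H) :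
    n21W (mk6 a' b' c' d' e' f') = n21W (mk6 a b c d e f) := by
  rw [congr_step hmar hcomm ha, congr_step1 hmar hcomm hb, congr_step2 hmar hcomm hc,
      congr_step3 hmar hcomm hd, congr_step4 hmar hcomm he, congr_step5 hmar hcomm hf]

lemma pcomm_mem_conj (x t : E) : x⁻¹ * (t⁻¹ * x * t) ∈ H := by
  have : x⁻¹ * (t⁻¹ * x * t) = pcomm x t := by simp [pcomm]; group
  rw [this]; exact hcomm x t

lemma n21W_conj_eq (a b c d e f w : E) :
    n21W (mk6 (w⁻¹*a*w) (w⁻¹*b*w) (w⁻¹*c*w) (w⁻¹*d*w) (w⁻¹*e*w) (w⁻¹*f*w))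
      = n21W (mk6 a b c d e f) :=
  congr6 hmar hcomm (pcomm_mem_conj hmar hcomm a w) (pcomm_mem_conj hmar hcomm b w)
    (pcomm_mem_conj hmar hcomm c w) (pcomm_mem_conj hmar hcomm d w)
    (pcomm_mem_conj hmar hcomm e w) (pcomm_mem_conj hmar hcomm f w)

lemma n21W_central (g : Fin 6 → E) (w : E) : n21W g * w = w * n21W g := by
  have h1 : w⁻¹ * n21W g * w
      = n21W (mk6 (w⁻¹*(g 0)*w) (w⁻¹*(g 1)*w) (w⁻¹*(g 2)*w) (w⁻¹*(g 3)*w)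
          (w⁻¹*(g 4)*w) (w⁻¹*(g 5)*w)) := by
    rw [n21W_conj g w]
    congr 1
    funext i; fin_cases i <;> rfl
  rw [n21W_conj_eq hmar hcomm] at h1
  rw [← eq_mk6 g] at h1
  calc n21W g * w = w * (w⁻¹ * n21W g * w) := by group
    _ = w * n21W g := by rw [h1]

lemma n21W_comm (g h : Fin 6 → E) : n21W g * n21W h = n21W h * n21W g :=
  n21W_central hmar hcomm g (n21W h)

lemma central_collapse (g : Fin 6 → E) (w : E) : w⁻¹ * n21W g * w = n21W g := by
  have h := n21W_central hmar hcomm g w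
  calc w⁻¹ * n21W g * w = w⁻¹ * (n21W g * w) := by group
    _ = w⁻¹ * (w * n21W g) := by rw [h]
    _ = n21W g := by group


lemma mem_refl (x : E) : x⁻¹ * x ∈ H := by
  rw [inv_mul_cancel]; exact H.one_mem

lemma mem_conj' (x t : E) : x⁻¹ * (t * x * t⁻¹) ∈ H := by
  simpa using pcomm_mem_conj hmar hcomm x t⁻¹

lemma ml0 (u w b c d e f : E) :
    n21W (mk6 (u*w) b c d e f) = n21W (mk6 u b c d e f) * n21W (mk6 w b c d e f) := by
  set P := pcomm u b with hP
  set Q := pcomm w b with hQ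
  set C := pcomm (pcomm d e) f with hC
  set X := pcomm (w⁻¹ * P * w) c with hX
  set Y := pcomm Q c with hY
  have e1 : pcomm (u*w) b = (w⁻¹ * P * w) * Q := by
    rw [pcomm_mul_left]
  have e2 : n21W (mk6 (u*w) b c d e f)
      = Y⁻¹ * pcomm (Q⁻¹ * X * Q) C * Y * pcomm Y C := by
    rw [n21W_mk6, ← hC, e1, pcomm_mul_left (w⁻¹ * P * w) Q c, ← hX, ← hY,
        pcomm_mul_left (Q⁻¹ * X * Q) Y C]
  have hYC : pcomm Y C = n21W (mk6 w b c d e f) := by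
    rw [hY, hQ, hC, n21W_mk6]
  have inner : pcomm X (Q*C*Q⁻¹) = n21W (mk6 u b c d e f) := by
    rw [hX, pcomm_conj_left P w c,
        pcomm_conj_left (pcomm P (w*c*w⁻¹)) w (Q*C*Q⁻¹)]
    have hconj : w*(Q*C*Q⁻¹)*w⁻¹
        = pcomm (pcomm ((w*Q)*d*(w*Q)⁻¹) ((w*Q)*e*(w*Q)⁻¹)) ((w*Q)*f*(w*Q)⁻¹) := by
      rw [hC]
      have h2 := conjC d e f (w*Q)⁻¹
      simp only [inv_inv] at h2
      rw [← h2]; group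
    rw [hconj, hP]
    have h3 : pcomm (pcomm (pcomm u b) (w*c*w⁻¹))
        (pcomm (pcomm ((w*Q)*d*(w*Q)⁻¹) ((w*Q)*e*(w*Q)⁻¹)) ((w*Q)*f*(w*Q)⁻¹))
        = n21W (mk6 u b (w*c*w⁻¹) ((w*Q)*d*(w*Q)⁻¹) ((w*Q)*e*(w*Q)⁻¹) ((w*Q)*f*(w*Q)⁻¹)) := by
      rw [n21W_mk6]
    rw [h3]
    rw [congr6 hmar hcomm (mem_refl hmar hcomm u) (mem_refl hmar hcomm b)
      (mem_conj' hmar hcomm c w) (mem_conj' hmar hcomm d (w*Q))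
      (mem_conj' hmar hcomm e (w*Q)) (mem_conj' hmar hcomm f (w*Q))]
    exact central_collapse hmar hcomm (mk6 u b c d e f) w
  have hXC : pcomm (Q⁻¹ * X * Q) C = n21W (mk6 u b c d e f) := by
    rw [pcomm_conj_left X Q C, inner]
    exact central_collapse hmar hcomm (mk6 u b c d e f) Q
  rw [e2, hXC, hYC]
  have h4 := central_collapse hmar hcomm (mk6 u b c d e f) Y
  calc Y⁻¹ * n21W (mk6 u b c d e f) * Y * n21W (mk6 w b c d e f)
      = (Y⁻¹ * n21W (mk6 u b c d e f) * Y) * n21W (mk6 w b c d e f) := by group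
    _ = n21W (mk6 u b c d e f) * n21W (mk6 w b c d e f) := by rw [h4]

lemma ml1 (a u w c d e f : E) :
    n21W (mk6 a (u*w) c d e f) = n21W (mk6 a u c d e f) * n21W (mk6 a w c d e f) := by
  set P := pcomm a w with hP
  set Q := pcomm a u with hQ
  set C := pcomm (pcomm d e) f with hC
  set s := w⁻¹ * Q * w with hs
  set X := pcomm P c with hX
  set Y := pcomm s c with hY
  have e1 : pcomm a (u*w) = P * s := by
    rw [pcomm_mul_right]
  have e2 : n21W (mk6 a (u*w) c d e f)
      = Y⁻¹ * pcomm (s⁻¹ * X * s) C * Y * pcomm Y C := by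
    rw [n21W_mk6, ← hC, e1, pcomm_mul_left P s c, ← hX, ← hY,
        pcomm_mul_left (s⁻¹ * X * s) Y C]
  have h1 : pcomm (s⁻¹ * X * s) C = n21W (mk6 a w c d e f) := by
    rw [pcomm_conj_left X s C]
    have hconj : s*C*s⁻¹
        = pcomm (pcomm (s*d*s⁻¹) (s*e*s⁻¹)) (s*f*s⁻¹) := by
      rw [hC]
      have h2 := conjC d e f s⁻¹
      simp only [inv_inv] at h2
      rw [← h2]
    rw [hconj, hX, hP]
    have h3 : pcomm (pcomm (pcomm a w) c)
        (pcomm (pcomm (s*d*s⁻¹) (s*e*s⁻¹)) (s*f*s⁻¹))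
        = n21W (mk6 a w c (s*d*s⁻¹) (s*e*s⁻¹) (s*f*s⁻¹)) := by rw [n21W_mk6]
    rw [h3]
    rw [congr6 hmar hcomm (mem_refl hmar hcomm a) (mem_refl hmar hcomm w)
      (mem_refl hmar hcomm c) (mem_conj' hmar hcomm d s)
      (mem_conj' hmar hcomm e s) (mem_conj' hmar hcomm f s)]
    exact central_collapse hmar hcomm (mk6 a w c d e f) s
  have h2 : pcomm Y C = n21W (mk6 a u c d e f) := by
    rw [hY, hs, pcomm_conj_left Q w c,
        pcomm_conj_left (pcomm Q (w*c*w⁻¹)) w C]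
    have hconj : w*C*w⁻¹
        = pcomm (pcomm (w*d*w⁻¹) (w*e*w⁻¹)) (w*f*w⁻¹) := by
      rw [hC]
      have h4 := conjC d e f w⁻¹
      simp only [inv_inv] at h4
      rw [← h4]
    rw [hconj, hQ]
    have h5 : pcomm (pcomm (pcomm a u) (w*c*w⁻¹))
        (pcomm (pcomm (w*d*w⁻¹) (w*e*w⁻¹)) (w*f*w⁻¹))
        = n21W (mk6 a u (w*c*w⁻¹) (w*d*w⁻¹) (w*e*w⁻¹) (w*f*w⁻¹)) := by rw [n21W_mk6]
    rw [h5]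
    rw [congr6 hmar hcomm (mem_refl hmar hcomm a) (mem_refl hmar hcomm u)
      (mem_conj' hmar hcomm c w) (mem_conj' hmar hcomm d w)
      (mem_conj' hmar hcomm e w) (mem_conj' hmar hcomm f w)]
    exact central_collapse hmar hcomm (mk6 a u c d e f) w
  rw [e2, h1, h2]
  have h6 := central_collapse hmar hcomm (mk6 a w c d e f) Y
  calc Y⁻¹ * n21W (mk6 a w c d e f) * Y * n21W (mk6 a u c d e f)
      = (Y⁻¹ * n21W (mk6 a w c d e f) * Y) * n21W (mk6 a u c d e f) := by group
    _ = n21W (mk6 a w c d e f) * n21W (mk6 a u c d e f) := by rw [h6]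
    _ = n21W (mk6 a u c d e f) * n21W (mk6 a w c d e f) :=
        n21W_comm hmar hcomm _ _

lemma ml2 (a b u w d e f : E) :
    n21W (mk6 a b (u*w) d e f) = n21W (mk6 a b u d e f) * n21W (mk6 a b w d e f) := by
  set B1 := pcomm (pcomm a b) w with hB1
  set B2 := pcomm (pcomm a b) u with hB2
  set C := pcomm (pcomm d e) f with hC
  set s := w⁻¹ * B2 * w with hs
  have e1 : pcomm (pcomm a b) (u*w) = B1 * s := by
    rw [pcomm_mul_right]
  have e2 : n21W (mk6 a b (u*w) d e f)
      = s⁻¹ * pcomm B1 C * s * pcomm s C := by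
    rw [n21W_mk6, ← hC, e1, pcomm_mul_left B1 s C]
  have h1 : pcomm B1 C = n21W (mk6 a b w d e f) := by
    rw [hB1, hC, n21W_mk6]
  have h2 : pcomm s C = n21W (mk6 a b u d e f) := by
    rw [hs, pcomm_conj_left B2 w C]
    have hconj : w*C*w⁻¹
        = pcomm (pcomm (w*d*w⁻¹) (w*e*w⁻¹)) (w*f*w⁻¹) := by
      rw [hC]
      have h4 := conjC d e f w⁻¹
      simp only [inv_inv] at h4
      rw [← h4]
    rw [hconj, hB2]
    have h5 : pcomm (pcomm (pcomm a b) u)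
        (pcomm (pcomm (w*d*w⁻¹) (w*e*w⁻¹)) (w*f*w⁻¹))
        = n21W (mk6 a b u (w*d*w⁻¹) (w*e*w⁻¹) (w*f*w⁻¹)) := by rw [n21W_mk6]
    rw [h5]
    rw [congr6 hmar hcomm (mem_refl hmar hcomm a) (mem_refl hmar hcomm b)
      (mem_refl hmar hcomm u) (mem_conj' hmar hcomm d w)
      (mem_conj' hmar hcomm e w) (mem_conj' hmar hcomm f w)]
    exact central_collapse hmar hcomm (mk6 a b u d e f) w
  rw [e2, h1, h2]
  have h6 := central_collapse hmar hcomm (mk6 a b w d e f) s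
  calc s⁻¹ * n21W (mk6 a b w d e f) * s * n21W (mk6 a b u d e f)
      = (s⁻¹ * n21W (mk6 a b w d e f) * s) * n21W (mk6 a b u d e f) := by group
    _ = n21W (mk6 a b w d e f) * n21W (mk6 a b u d e f) := by rw [h6]
    _ = n21W (mk6 a b u d e f) * n21W (mk6 a b w d e f) :=
        n21W_comm hmar hcomm _ _

lemma ml3 (a b c u w e f : E) :
    n21W (mk6 a b c (u*w) e f) = n21W (mk6 a b c u e f) * n21W (mk6 a b c w e f) := by
  rw [n21W_swap a b c (u*w) e f, ml0 hmar hcomm u w e f a b c,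
      n21W_swap a b c u e f, n21W_swap a b c w e f]
  have hcm := n21W_comm hmar hcomm (mk6 u e f a b c) (mk6 w e f a b c)
  rw [hcm, mul_inv_rev]

lemma ml4 (a b c d u w f : E) :
    n21W (mk6 a b c d (u*w) f) = n21W (mk6 a b c d u f) * n21W (mk6 a b c d w f) := by
  rw [n21W_swap a b c d (u*w) f, ml1 hmar hcomm d u w f a b c,
      n21W_swap a b c d u f, n21W_swap a b c d w f]
  have hcm := n21W_comm hmar hcomm (mk6 d u f a b c) (mk6 d w f a b c)
  rw [hcm, mul_inv_rev]

lemma ml5 (a b c d e u w : E) :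
    n21W (mk6 a b c d e (u*w)) = n21W (mk6 a b c d e u) * n21W (mk6 a b c d e w) := by
  rw [n21W_swap a b c d e (u*w), ml2 hmar hcomm d e u w a b c,
      n21W_swap a b c d e u, n21W_swap a b c d e w]
  have hcm := n21W_comm hmar hcomm (mk6 d e u a b c) (mk6 d e w a b c)
  rw [hcm, mul_inv_rev]

lemma ml_upd (g : Fin 6 → E) (i : Fin 6) (u w : E) :
    n21W (Function.update g i (u*w))
      = n21W (Function.update g i u) * n21W (Function.update g i w) := by
  fin_cases i
  · exact ml0 hmar hcomm u w (g 1) (g 2) (g 3) (g 4) (g 5)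
  · exact ml1 hmar hcomm (g 0) u w (g 2) (g 3) (g 4) (g 5)
  · exact ml2 hmar hcomm (g 0) (g 1) u w (g 3) (g 4) (g 5)
  · exact ml3 hmar hcomm (g 0) (g 1) (g 2) u w (g 4) (g 5)
  · exact ml4 hmar hcomm (g 0) (g 1) (g 2) (g 3) u w (g 5)
  · exact ml5 hmar hcomm (g 0) (g 1) (g 2) (g 3) (g 4) u w

lemma v_one_upd (g : Fin 6 → E) (i : Fin 6) : n21W (Function.update g i 1) = 1 := by
  fin_cases i
  · exact n21W_one0 (g 1) (g 2) (g 3) (g 4) (g 5)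
  · exact n21W_one1 (g 0) (g 2) (g 3) (g 4) (g 5)
  · exact n21W_one2 (g 0) (g 1) (g 3) (g 4) (g 5)
  · exact n21W_one3 (g 0) (g 1) (g 2) (g 4) (g 5)
  · exact n21W_one4 (g 0) (g 1) (g 2) (g 3) (g 5)
  · exact n21W_one5 (g 0) (g 1) (g 2) (g 3) (g 4)

lemma vpow (g : Fin 6 → E) (i : Fin 6) (u : E) :
    ∀ m : ℕ, n21W (Function.update g i (u^m)) = (n21W (Function.update g i u))^m
  | 0 => by rw [pow_zero, pow_zero]; exact v_one_upd hmar hcomm g i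
  | m+1 => by
      rw [pow_succ, ml_upd hmar hcomm, vpow g i u m, pow_succ]

lemma kill_list (g : Fin 6 → E) (i : Fin 6) (m2 : ℕ) :
    ∀ L : List E, (∀ x ∈ L, (n21W (Function.update g i x))^m2 = 1) →
      (n21W (Function.update g i L.prod))^m2 = 1
  | [], _ => by
      rw [List.prod_nil, v_one_upd hmar hcomm, one_pow]
  | x :: L, h => by
      rw [List.prod_cons, ml_upd hmar hcomm]
      have hc : Commute (n21W (Function.update g i x))
          (n21W (Function.update g i L.prod)) := n21W_comm hmar hcomm _ _
      rw [hc.mul_pow, h x List.mem_cons_self,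
        kill_list g i m2 L (fun y hy => h y (List.mem_cons_of_mem _ hy)), one_mul]


lemma core {k' : ℕ} (e : Fin k' → E) (nn : Fin k' → ℕ) (i0 : Fin k')
    (horder : ∀ t, e t ^ nn t ∈ H)
    (hgen : ∀ x : E, ∃ m : Fin k' → ℕ, (List.ofFn fun t => e t ^ m t).prod⁻¹ * x ∈ H)
    (m2 : ℕ) (hm2 : ∀ t, t ≠ i0 → nn t ∣ m2) :
    ∀ (g : Fin 6 → E) (i : Fin 6),
      n21W (Function.update g i (g i * (e i0)^m2)) = n21W g := by
  have kill_elt : ∀ (h : Fin 6 → E) (j : Fin 6) (t : Fin k') (m : ℕ), t ≠ i0 →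
      (n21W (Function.update h j (e t ^ m)))^m2 = 1 := by
    intro h j t m ht
    have hVt : (n21W (Function.update h j (e t)))^(nn t) = 1 := by
      rw [← vpow hmar hcomm]
      have h1 : n21W (Function.update h j (1 * e t ^ nn t))
          = n21W (Function.update h j 1) :=
        margin_update hmar hcomm (horder t) h j 1
      rw [one_mul] at h1
      rw [h1, v_one_upd hmar hcomm]
    obtain ⟨cd, hcd⟩ := hm2 t ht
    rw [vpow hmar hcomm, ← pow_mul, mul_comm m m2, pow_mul, hcd, pow_mul, hVt,
      one_pow, one_pow]
  have expand_kill : ∀ (h : Fin 6 → E) (j : Fin 6),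
      (∀ m : ℕ, (n21W (Function.update h j (e i0 ^ m)))^m2 = 1) →
      (n21W h)^m2 = 1 := by
    intro h j hi0
    obtain ⟨m, hm⟩ := hgen (h j)
    have h3 : h j = (List.ofFn fun t => e t ^ m t).prod
        * ((List.ofFn fun t => e t ^ m t).prod⁻¹ * h j) := by group
    have h2 : n21W h = n21W (Function.update h j (List.ofFn fun t => e t ^ m t).prod) := by
      calc n21W h = n21W (Function.update h j (h j)) := by rw [Function.update_eq_self]
        _ = _ := by rw [h3]; exact margin_update hmar hcomm hm h j _
    rw [h2]
    apply kill_list hmar hcomm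
    intro x hx
    rw [List.mem_ofFn] at hx
    obtain ⟨t, rfl⟩ := hx
    by_cases ht : t = i0
    · subst ht; exact hi0 (m t)
    · exact kill_elt _ _ t (m t) ht
  intro g i
  have step1 : n21W (Function.update g i (g i * (e i0)^m2))
      = n21W g * n21W (Function.update g i ((e i0)^m2)) := by
    rw [ml_upd hmar hcomm, Function.update_eq_self]
  rw [step1, vpow hmar hcomm]
  suffices hF : (n21W (Function.update g i (e i0)))^m2 = 1 by
    rw [hF, mul_one]
  -- case analysis on the slot
  fin_cases i
  · -- slot 0 : partner slot 1
    apply expand_kill (Function.update g 0 (e i0)) 1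
    intro m
    rw [vpow hmar hcomm]
    have : n21W (Function.update (Function.update g 0 (e i0)) 1 (e i0)) = 1 :=
      n21W_eq01 (e i0) (g 2) (g 3) (g 4) (g 5)
    rw [this, one_pow, one_pow]
  · -- slot 1 : partner slot 0
    apply expand_kill (Function.update g 1 (e i0)) 0
    intro m
    rw [vpow hmar hcomm]
    have : n21W (Function.update (Function.update g 1 (e i0)) 0 (e i0)) = 1 :=
      n21W_eq01 (e i0) (g 2) (g 3) (g 4) (g 5)
    rw [this, one_pow, one_pow]
  · -- slot 2 : expand slots 0 then 1
    apply expand_kill (Function.update g 2 (e i0)) 0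
    intro m
    rw [vpow hmar hcomm, ← pow_mul, mul_comm m m2, pow_mul]
    suffices hI : (n21W (Function.update (Function.update g 2 (e i0)) 0 (e i0)))^m2 = 1 by
      rw [hI, one_pow]
    apply expand_kill (Function.update (Function.update g 2 (e i0)) 0 (e i0)) 1
    intro m'
    rw [vpow hmar hcomm]
    have : n21W (Function.update (Function.update (Function.update g 2 (e i0)) 0 (e i0)) 1 (e i0)) = 1 :=
      n21W_eq01 (e i0) (e i0) (g 3) (g 4) (g 5)
    rw [this, one_pow, one_pow]
  · -- slot 3 : partner slot 4
    apply expand_kill (Function.update g 3 (e i0)) 4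
    intro m
    rw [vpow hmar hcomm]
    have : n21W (Function.update (Function.update g 3 (e i0)) 4 (e i0)) = 1 :=
      n21W_eq34 (g 0) (g 1) (g 2) (e i0) (g 5)
    rw [this, one_pow, one_pow]
  · -- slot 4 : partner slot 3
    apply expand_kill (Function.update g 4 (e i0)) 3
    intro m
    rw [vpow hmar hcomm]
    have : n21W (Function.update (Function.update g 4 (e i0)) 3 (e i0)) = 1 :=
      n21W_eq34 (g 0) (g 1) (g 2) (e i0) (g 5)
    rw [this, one_pow, one_pow]
  · -- slot 5 : expand slots 3 then 4
    apply expand_kill (Function.update g 5 (e i0)) 3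
    intro m
    rw [vpow hmar hcomm, ← pow_mul, mul_comm m m2, pow_mul]
    suffices hI : (n21W (Function.update (Function.update g 5 (e i0)) 3 (e i0)))^m2 = 1 by
      rw [hI, one_pow]
    apply expand_kill (Function.update (Function.update g 5 (e i0)) 3 (e i0)) 4
    intro m'
    rw [vpow hmar hcomm]
    have : n21W (Function.update (Function.update (Function.update g 5 (e i0)) 3 (e i0)) 4 (e i0)) = 1 :=
      n21W_eq34 (g 0) (g 1) (g 2) (e i0) (e i0)
    rw [this, one_pow, one_pow]

end Abstract

section Forward

lemma chain_dvd {k : ℕ} (n : Fin k → ℕ)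
    (hdvd : ∀ i : Fin k, ∀ h : (i : ℕ) + 1 < k, n ⟨(i : ℕ) + 1, h⟩ ∣ n i) :
    ∀ d j : ℕ, ∀ h : j + d < k, n ⟨j + d, h⟩ ∣ n ⟨j, by omega⟩ := by
  intro d
  induction d with
  | zero => intro j h; exact dvd_refl _
  | succ d ih =>
      intro j h
      have h1 : j + d < k := by omega
      have h1' : j + d + 1 < k := by omega
      have h2 := hdvd ⟨j + d, h1⟩ h1'
      exact dvd_trans h2 (ih j h1)

variable {E : Type} [Group E] {H : Subgroup E}

lemma mk_list_prod [nN : H.Normal] :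
    ∀ L : List E, ((L.prod : E) : E ⧸ H) = (L.map (fun a => ((a : E) : E ⧸ H))).prod
  | [] => by simp
  | x :: L => by
      rw [List.prod_cons, List.map_cons, List.prod_cons, ← mk_list_prod L]
      rfl

lemma quot_comm_pcomm_mem [nN : H.Normal] {Q : Type} [Group Q] (μ : Q ≃* E ⧸ H)
    (x y : E) [hQ : Std.Commutative (α := Q) (· * ·)] : pcomm x y ∈ H := by
  have hQcomm : ∀ q1 q2 : E ⧸ H, q1 * q2 = q2 * q1 := by
    intro q1 q2
    apply μ.symm.injective
    rw [map_mul, map_mul]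
    exact hQ.comm _ _
  have hmk : ((pcomm x y : E) : E ⧸ H) = 1 := by
    show ↑(x⁻¹ * y⁻¹ * x * y) = (1 : E ⧸ H)
    have h1 : ((x⁻¹ * y⁻¹ * x * y : E) : E ⧸ H)
        = (x : E ⧸ H)⁻¹ * (y : E ⧸ H)⁻¹ * (x : E ⧸ H) * (y : E ⧸ H) := by
      rfl
    rw [h1]
    have h2 : (y : E ⧸ H)⁻¹ * (x : E ⧸ H) = (x : E ⧸ H) * (y : E ⧸ H)⁻¹ := hQcomm _ _
    calc (x : E ⧸ H)⁻¹ * (y : E ⧸ H)⁻¹ * (x : E ⧸ H) * (y : E ⧸ H)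
        = (x : E ⧸ H)⁻¹ * ((y : E ⧸ H)⁻¹ * (x : E ⧸ H)) * (y : E ⧸ H) := by group
      _ = (x : E ⧸ H)⁻¹ * ((x : E ⧸ H) * (y : E ⧸ H)⁻¹) * (y : E ⧸ H) := by rw [h2]
      _ = 1 := by group
  exact (QuotientGroup.eq_one_iff _).mp hmk

end Forward

lemma forward (G : Type) [Group G] (k : ℕ) (hk : 1 ≤ k) (n : Fin k → ℕ)
    (hn : ∀ i : Fin k, 2 ≤ n i)
    (hdvd : ∀ i : Fin k, ∀ h : (i : ℕ) + 1 < k, n ⟨(i : ℕ) + 1, h⟩ ∣ n i)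
    (hG : Nonempty (G ≃* Multiplicative ((i : Fin k) → ZMod (n i))))
    (hc : IsN21Capable G) :
    ∃ h : 2 ≤ k, n ⟨0, (by omega : 1 ≤ k)⟩ = n ⟨1, h⟩ := by
  haveI hNZ : ∀ i : Fin k, NeZero (n i) := fun i => ⟨by have := hn i; omega⟩
  obtain ⟨E, instE, H, hN, hset, ⟨ψ⟩⟩ := hc
  obtain ⟨φ⟩ := hG
  let μ : Multiplicative ((i : Fin k) → ZMod (n i)) ≃* E ⧸ H := φ.symm.trans ψ
  have hmar : ∀ a ∈ H, ∀ (g : Fin 6 → E) (i : Fin 6),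
      n21W (Function.update g i (g i * a)) = n21W g := by
    intro a ha
    have h1 : a ∈ n21MarginalSet E := by rw [← hset]; exact ha
    exact h1
  haveI : Std.Commutative (α := Multiplicative ((i : Fin k) → ZMod (n i))) (· * ·) :=
    ⟨fun a b => mul_comm a b⟩
  haveI := hN
  have hcomm : ∀ x y : E, pcomm x y ∈ H := fun x y => quot_comm_pcomm_mem μ x y
  -- generators
  let xg : Fin k → Multiplicative ((i : Fin k) → ZMod (n i)) :=
    fun t => Multiplicative.ofAdd (Pi.single t 1)
  have hxg_pow : ∀ (t : Fin k) (m : ℕ),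
      xg t ^ m = Multiplicative.ofAdd (Pi.single t ((m : ZMod (n t)))) := by
    intro t m
    show Multiplicative.ofAdd (Pi.single t 1) ^ m = _
    rw [← ofAdd_nsmul]
    congr 1
    funext j
    by_cases hj : j = t
    · subst hj
      simp [Pi.single_eq_same]
    · simp [Pi.single_eq_of_ne hj]
  choose ee hee using fun t => QuotientGroup.mk_surjective (μ (xg t))
  have horder : ∀ t, ee t ^ (n t) ∈ H := by
    intro t
    apply (QuotientGroup.eq_one_iff _).mp
    have h1 : ((ee t ^ (n t) : E) : E ⧸ H) = (μ (xg t)) ^ (n t) := by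
      rw [← hee t]; rfl
    rw [h1, ← map_pow, hxg_pow]
    have h2 : ((n t : ℕ) : ZMod (n t)) = 0 := ZMod.natCast_self _
    rw [h2, Pi.single_zero]
    show μ 1 = 1
    exact map_one μ
  have hgen : ∀ x : E, ∃ m : Fin k → ℕ,
      (List.ofFn fun t => ee t ^ m t).prod⁻¹ * x ∈ H := by
    intro x
    set ξ := Multiplicative.toAdd (μ.symm ((x : E ⧸ H))) with hξ
    refine ⟨fun t => (ξ t).val, ?_⟩
    have hmk : (((List.ofFn fun t => ee t ^ (ξ t).val).prod : E) : E ⧸ H) = (x : E ⧸ H) := by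
      have h1 : (((List.ofFn fun t => ee t ^ (ξ t).val).prod : E) : E ⧸ H)
          = (List.ofFn fun t => ((ee t : E) : E ⧸ H) ^ (ξ t).val).prod := by
        rw [mk_list_prod, List.map_ofFn]
        congr 1
      rw [h1]
      have h2 : (List.ofFn fun t => ((ee t : E) : E ⧸ H) ^ (ξ t).val)
          = List.ofFn fun t => μ (xg t ^ (ξ t).val) := by
        congr 1
        funext t
        rw [hee t, map_pow]
      rw [h2]
      have h3 : (List.ofFn fun t => μ (xg t ^ (ξ t).val)).prod
          = μ ((List.ofFn fun t => xg t ^ (ξ t).val).prod) := by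
        have h3' : (List.ofFn fun t => μ (xg t ^ (ξ t).val))
            = List.map (⇑μ) (List.ofFn fun t => xg t ^ (ξ t).val) := by
          rw [List.map_ofFn]; rfl
        rw [h3', ← map_list_prod μ]
      rw [h3, List.prod_ofFn]
      have h4 : ∏ t, xg t ^ (ξ t).val = Multiplicative.ofAdd ξ := by
        have h5 : ∀ t, xg t ^ (ξ t).val
            = Multiplicative.ofAdd (Pi.single t (ξ t)) := by
          intro t
          rw [hxg_pow]
          congr 2
          rw [show ((((ξ t).val : ℕ)) : ZMod (n t)) = ξ t from ZMod.natCast_rightInverse (ξ t)]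
        calc ∏ t, xg t ^ (ξ t).val = ∏ t, Multiplicative.ofAdd (Pi.single t (ξ t)) := by
              exact Finset.prod_congr rfl (fun t _ => h5 t)
          _ = Multiplicative.ofAdd (∑ t, Pi.single t (ξ t)) := by
              rw [ofAdd_sum]
          _ = Multiplicative.ofAdd ξ := by
              congr 1
              exact Finset.univ_sum_single ξ
      rw [h4, hξ]
      rw [ofAdd_toAdd]
      exact μ.apply_symm_apply _
    exact QuotientGroup.eq.mp hmk
  have hk0 : 0 < k := by omega
  have hmemcore : ∀ (m2 : ℕ), (∀ t : Fin k, t ≠ ⟨0, hk0⟩ → n t ∣ m2) →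
      ee ⟨0, hk0⟩ ^ m2 ∈ H := by
    intro m2 hm2
    have hmarg := core hmar hcomm ee n ⟨0, hk0⟩ horder hgen m2 hm2
    have h1 : ee ⟨0, hk0⟩ ^ m2 ∈ n21MarginalSet E := hmarg
    rw [← hset] at h1
    exact h1
  have hdvd0 : ∀ m2 : ℕ, ee ⟨0, hk0⟩ ^ m2 ∈ H → (n ⟨0, hk0⟩) ∣ m2 := by
    intro m2 hmem
    have h1 : ((ee ⟨0, hk0⟩ ^ m2 : E) : E ⧸ H) = 1 := (QuotientGroup.eq_one_iff _).mpr hmem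
    have h2 : (μ (xg ⟨0, hk0⟩)) ^ m2 = 1 := by
      rw [← hee, ← QuotientGroup.mk_pow]
      exact h1
    have h3 : xg ⟨0, hk0⟩ ^ m2 = 1 := by
      apply μ.injective
      rw [map_pow, h2, map_one]
    rw [hxg_pow] at h3
    have h4 : (Pi.single (⟨0,hk0⟩ : Fin k) ((m2 : ZMod (n ⟨0,hk0⟩)))) = (0 : (i : Fin k) → ZMod (n i)) := by
      have h4' := congrArg Multiplicative.toAdd h3
      simpa using h4'
    have h5 : ((m2 : ZMod (n ⟨0,hk0⟩))) = 0 := by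
      have h5' := congrFun h4 ⟨0, hk0⟩
      simpa [Pi.single_eq_same] using h5'
    exact (ZMod.natCast_eq_zero_iff _ _).mp h5
  by_cases h2 : 2 ≤ k
  · refine ⟨h2, ?_⟩
    have hm2 : ∀ t : Fin k, t ≠ ⟨0, hk0⟩ → n t ∣ n ⟨1, by omega⟩ := by
      intro t ht
      have htv : 1 ≤ (t : ℕ) := by
        rcases Nat.eq_zero_or_pos (t:ℕ) with h0 | h1
        · exact absurd (Fin.ext h0) ht
        · exact h1
      have h3 := chain_dvd n hdvd ((t:ℕ) - 1) 1 (by omega)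
      have he : (⟨1 + ((t:ℕ)-1), by omega⟩ : Fin k) = t := by
        apply Fin.ext
        show 1 + ((t:ℕ)-1) = (t:ℕ)
        omega
      rw [he] at h3
      exact h3
    have hd01 : n ⟨0, hk0⟩ ∣ n ⟨1, by omega⟩ := hdvd0 _ (hmemcore _ hm2)
    have hd10 : n ⟨1, by omega⟩ ∣ n ⟨0, hk0⟩ := by
      have h3 := chain_dvd n hdvd 1 0 (by omega)
      exact h3
    exact Nat.dvd_antisymm hd01 hd10
  · exfalso
    have hm2 : ∀ t : Fin k, t ≠ ⟨0, hk0⟩ → n t ∣ 1 := by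
      intro t ht
      exfalso
      apply ht
      apply Fin.ext
      have h4 := t.2
      show (t:ℕ) = 0
      omega
    have h6 := hdvd0 1 (hmemcore 1 hm2)
    have h7 := hn ⟨0, hk0⟩
    have h8 := Nat.dvd_one.mp h6
    omega



section Matrices
variable {R : Type} [CommRing R]

def Lv (a : ℕ) (A : Matrix (Fin 7) (Fin 7) R) : Prop :=
  ∀ i j : Fin 7, (j:ℕ) < (i:ℕ) + a → A i j = 0

namespace Lv

lemma mono {a a' : ℕ} {A : Matrix (Fin 7) (Fin 7) R} (h : a' ≤ a) (hA : Lv a A) :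
    Lv a' A := fun i j hij => hA i j (by omega)

lemma zero_mat (a : ℕ) : Lv a (0 : Matrix (Fin 7) (Fin 7) R) := fun _ _ _ => rfl

lemma one_mat : Lv 0 (1 : Matrix (Fin 7) (Fin 7) R) := by
  intro i j hij
  exact Matrix.one_apply_ne (by intro hc; subst hc; omega)

lemma add {a : ℕ} {A B : Matrix (Fin 7) (Fin 7) R} (hA : Lv a A) (hB : Lv a B) :
    Lv a (A + B) := fun i j hij => by
  rw [Matrix.add_apply, hA i j hij, hB i j hij, add_zero]

lemma neg {a : ℕ} {A : Matrix (Fin 7) (Fin 7) R} (hA : Lv a A) : Lv a (-A) :=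
  fun i j hij => by rw [Matrix.neg_apply, hA i j hij, neg_zero]

lemma sub {a : ℕ} {A B : Matrix (Fin 7) (Fin 7) R} (hA : Lv a A) (hB : Lv a B) :
    Lv a (A - B) := by
  rw [sub_eq_add_neg]; exact hA.add hB.neg

lemma mul {a b : ℕ} {A B : Matrix (Fin 7) (Fin 7) R} (hA : Lv a A) (hB : Lv b B) :
    Lv (a + b) (A * B) := by
  intro i j hij
  rw [Matrix.mul_apply]
  apply Finset.sum_eq_zero
  intro m _
  by_cases hm : (m:ℕ) < (i:ℕ) + a
  · rw [hA i m hm, zero_mul]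
  · rw [hB m j (by omega), mul_zero]

lemma sum {a : ℕ} {ι : Type*} (s : Finset ι) (f : ι → Matrix (Fin 7) (Fin 7) R)
    (h : ∀ i ∈ s, Lv a (f i)) : Lv a (∑ i ∈ s, f i) := by
  intro i j hij
  rw [Matrix.sum_apply]
  exact Finset.sum_eq_zero fun m hm => h m hm i j hij

lemma pow {N : Matrix (Fin 7) (Fin 7) R} (hN : Lv 1 N) : ∀ m, Lv m (N ^ m)
  | 0 => by rw [pow_zero]; exact one_mat
  | m+1 => by
      rw [pow_succ]
      have := (pow hN m).mul hN
      exact this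

lemma eq_zero {A : Matrix (Fin 7) (Fin 7) R} (hA : Lv 7 A) : A = 0 := by
  ext i j
  rw [Matrix.zero_apply]
  apply hA
  have := j.2
  omega

end Lv

lemma N7_zero {N : Matrix (Fin 7) (Fin 7) R} (hN : Lv 1 N) : N ^ 7 = 0 :=
  Lv.eq_zero (by simpa using Lv.pow hN 7)

def upOf (N : Matrix (Fin 7) (Fin 7) R) (hN : Lv 1 N) : (Matrix (Fin 7) (Fin 7) R)ˣ := by
  have hN7 : (-N)^7 = 0 := by rw [neg_pow, N7_zero hN, mul_zero]
  have key := geom_sum_mul (-N) 7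
  rw [hN7] at key
  have h2 : (-N) - 1 = -(1+N) := by abel
  rw [h2, mul_neg] at key
  have h3 : (∑ i ∈ Finset.range 7, (-N)^i) * (1+N) = 1 := by
    have h4 := congrArg Neg.neg key
    simpa using h4
  have hc : Commute (1+N) (∑ i ∈ Finset.range 7, (-N)^i) := by
    apply Commute.sum_right
    intro i _
    exact ((Commute.one_left (-N)).add_left ((Commute.refl N).neg_right)).pow_right i
  exact ⟨1+N, ∑ i ∈ Finset.range 7, (-N)^i, by rw [hc.eq]; exact h3, h3⟩

@[simp] lemma upOf_val (N : Matrix (Fin 7) (Fin 7) R) (hN : Lv 1 N) :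
    ((upOf N hN : (Matrix (Fin 7) (Fin 7) R)ˣ) : Matrix (Fin 7) (Fin 7) R) = 1 + N := rfl

def uG (a : ℕ) (x : (Matrix (Fin 7) (Fin 7) R)ˣ) : Prop :=
  Lv a ((x : Matrix (Fin 7) (Fin 7) R) - 1)

lemma uG.mono {a a' : ℕ} {x : (Matrix (Fin 7) (Fin 7) R)ˣ} (h : a' ≤ a) (hx : uG a x) :
    uG a' x := Lv.mono h hx

lemma uG_one (a : ℕ) : uG a (1 : (Matrix (Fin 7) (Fin 7) R)ˣ) := by
  unfold uG
  simp only [Units.val_one, sub_self]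
  exact Lv.zero_mat a

lemma uG_mul {a : ℕ} {x y : (Matrix (Fin 7) (Fin 7) R)ˣ} (hx : uG a x) (hy : uG a y) :
    uG a (x * y) := by
  unfold uG at *
  have key : ((x*y : (Matrix (Fin 7) (Fin 7) R)ˣ) : Matrix (Fin 7) (Fin 7) R) - 1
      = ((x : Matrix (Fin 7) (Fin 7) R) - 1) * ((y : Matrix (Fin 7) (Fin 7) R) - 1)
        + ((x : Matrix (Fin 7) (Fin 7) R) - 1) + ((y : Matrix (Fin 7) (Fin 7) R) - 1) := by
    rw [Units.val_mul]; noncomm_ring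
  rw [key]
  exact (((hx.mul hy).mono (by omega)).add hx).add hy

lemma upOf_eq {x : (Matrix (Fin 7) (Fin 7) R)ˣ} (hx : uG 1 x) :
    x = upOf ((x : Matrix (Fin 7) (Fin 7) R) - 1) hx := by
  apply Units.ext
  show (x : Matrix (Fin 7) (Fin 7) R) = 1 + ((x : Matrix (Fin 7) (Fin 7) R) - 1)
  abel

lemma inv_val_eq {x : (Matrix (Fin 7) (Fin 7) R)ˣ} (hx : uG 1 x) :
    ((x⁻¹ : (Matrix (Fin 7) (Fin 7) R)ˣ) : Matrix (Fin 7) (Fin 7) R)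
      = ∑ i ∈ Finset.range 7, (-((x : Matrix (Fin 7) (Fin 7) R) - 1))^i := by
  conv_lhs => rw [upOf_eq hx]
  rfl

lemma uG_inv_lv0 {x : (Matrix (Fin 7) (Fin 7) R)ˣ} (hx : uG 1 x) :
    Lv 0 ((x⁻¹ : (Matrix (Fin 7) (Fin 7) R)ˣ) : Matrix (Fin 7) (Fin 7) R) := by
  rw [inv_val_eq hx]
  apply Lv.sum
  intro i _
  exact (Lv.pow hx.neg i).mono (by omega)

lemma lv0_val {x : (Matrix (Fin 7) (Fin 7) R)ˣ} (hx : uG 1 x) :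
    Lv 0 ((x : (Matrix (Fin 7) (Fin 7) R)ˣ) : Matrix (Fin 7) (Fin 7) R) := by
  have h1 : ((x : (Matrix (Fin 7) (Fin 7) R)ˣ) : Matrix (Fin 7) (Fin 7) R)
      = (((x : (Matrix (Fin 7) (Fin 7) R)ˣ) : Matrix (Fin 7) (Fin 7) R) - 1) + 1 := by abel
  rw [h1]
  exact (hx.mono (by omega)).add Lv.one_mat

lemma uG_inv {a : ℕ} {x : (Matrix (Fin 7) (Fin 7) R)ˣ} (ha : 1 ≤ a) (hx : uG a x) :
    uG a x⁻¹ := by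
  unfold uG
  have key : ((x⁻¹ : (Matrix (Fin 7) (Fin 7) R)ˣ) : Matrix (Fin 7) (Fin 7) R) - 1
      = ((x⁻¹ : (Matrix (Fin 7) (Fin 7) R)ˣ) : Matrix (Fin 7) (Fin 7) R)
        * (-(((x : (Matrix (Fin 7) (Fin 7) R)ˣ) : Matrix (Fin 7) (Fin 7) R) - 1)) := by
    rw [mul_neg, mul_sub, mul_one, Units.inv_mul]
    abel
  rw [key]
  have h1 := (uG_inv_lv0 (hx.mono ha)).mul hx.neg
  exact h1.mono (by omega)


lemma pcomm_val (x y : (Matrix (Fin 7) (Fin 7) R)ˣ) :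
    ((pcomm x y : (Matrix (Fin 7) (Fin 7) R)ˣ) : Matrix (Fin 7) (Fin 7) R) - 1
      = ((x⁻¹ : (Matrix (Fin 7) (Fin 7) R)ˣ) : Matrix (Fin 7) (Fin 7) R)
        * ((y⁻¹ : (Matrix (Fin 7) (Fin 7) R)ˣ) : Matrix (Fin 7) (Fin 7) R)
        * ((x : Matrix (Fin 7) (Fin 7) R) * (y : Matrix (Fin 7) (Fin 7) R)
          - (y : Matrix (Fin 7) (Fin 7) R) * (x : Matrix (Fin 7) (Fin 7) R)) := by
  have h1 : ((pcomm x y : (Matrix (Fin 7) (Fin 7) R)ˣ) : Matrix (Fin 7) (Fin 7) R)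
      = ((x⁻¹ : (Matrix (Fin 7) (Fin 7) R)ˣ) : Matrix (Fin 7) (Fin 7) R)
        * ((y⁻¹ : (Matrix (Fin 7) (Fin 7) R)ˣ) : Matrix (Fin 7) (Fin 7) R)
        * ((x : Matrix (Fin 7) (Fin 7) R) * (y : Matrix (Fin 7) (Fin 7) R)) := by
    show ((x⁻¹ * y⁻¹ * x * y : (Matrix (Fin 7) (Fin 7) R)ˣ) : Matrix (Fin 7) (Fin 7) R) = _
    rw [Units.val_mul, Units.val_mul, Units.val_mul]
    noncomm_ring
  have h2 : ((x⁻¹ : (Matrix (Fin 7) (Fin 7) R)ˣ) : Matrix (Fin 7) (Fin 7) R)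
        * ((y⁻¹ : (Matrix (Fin 7) (Fin 7) R)ˣ) : Matrix (Fin 7) (Fin 7) R)
        * ((y : Matrix (Fin 7) (Fin 7) R) * (x : Matrix (Fin 7) (Fin 7) R)) = 1 := by
    rw [mul_assoc]
    rw [← mul_assoc ((y⁻¹ : (Matrix (Fin 7) (Fin 7) R)ˣ) : Matrix (Fin 7) (Fin 7) R)]
    rw [Units.inv_mul, one_mul, Units.inv_mul]
  rw [h1, ← h2]
  rw [mul_sub]

lemma uG_pcomm {a b : ℕ} {x y : (Matrix (Fin 7) (Fin 7) R)ˣ}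
    (ha : 1 ≤ a) (hb : 1 ≤ b) (hx : uG a x) (hy : uG b y) :
    uG (a+b) (pcomm x y) := by
  unfold uG
  rw [pcomm_val]
  have hS : Lv (a+b) ((x : Matrix (Fin 7) (Fin 7) R) * (y : Matrix (Fin 7) (Fin 7) R)
      - (y : Matrix (Fin 7) (Fin 7) R) * (x : Matrix (Fin 7) (Fin 7) R)) := by
    have key : (x : Matrix (Fin 7) (Fin 7) R) * (y : Matrix (Fin 7) (Fin 7) R)
        - (y : Matrix (Fin 7) (Fin 7) R) * (x : Matrix (Fin 7) (Fin 7) R)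
        = ((x : Matrix (Fin 7) (Fin 7) R) - 1) * ((y : Matrix (Fin 7) (Fin 7) R) - 1)
          - ((y : Matrix (Fin 7) (Fin 7) R) - 1) * ((x : Matrix (Fin 7) (Fin 7) R) - 1) := by
      noncomm_ring
    rw [key]
    exact (hx.mul hy).sub ((hy.mul hx).mono (by omega))
  have hpre : Lv 0 (((x⁻¹ : (Matrix (Fin 7) (Fin 7) R)ˣ) : Matrix (Fin 7) (Fin 7) R)
      * ((y⁻¹ : (Matrix (Fin 7) (Fin 7) R)ˣ) : Matrix (Fin 7) (Fin 7) R)) := by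
    have h1 := (uG_inv_lv0 (hx.mono ha)).mul (uG_inv_lv0 (hy.mono hb))
    exact h1.mono (by omega)
  have := hpre.mul hS
  exact this.mono (by omega)

lemma uG7_eq_one {x : (Matrix (Fin 7) (Fin 7) R)ˣ} (hx : uG 7 x) : x = 1 := by
  apply Units.ext
  have h1 := Lv.eq_zero hx
  have h2 : ((x : (Matrix (Fin 7) (Fin 7) R)ˣ) : Matrix (Fin 7) (Fin 7) R) - 1 = 0 := h1
  rw [sub_eq_zero] at h2
  simpa using h2

lemma uG_pcomm_ge7 {a b : ℕ} {x y : (Matrix (Fin 7) (Fin 7) R)ˣ}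
    (ha : 1 ≤ a) (hb : 1 ≤ b) (hab : 7 ≤ a + b) (hx : uG a x) (hy : uG b y) :
    pcomm x y = 1 :=
  uG7_eq_one (((uG_pcomm ha hb hx hy)).mono hab)

lemma FIN {B C p q : (Matrix (Fin 7) (Fin 7) R)ˣ}
    (hB : uG 3 B) (hC : uG 3 C) (hp : uG 4 p) (hq : uG 4 q) :
    pcomm (p * B * q) C = pcomm B C := by
  have hpC : pcomm p C = 1 := uG_pcomm_ge7 (by omega) (by omega) (by omega) hp hC
  have hqC : pcomm q C = 1 := uG_pcomm_ge7 (by omega) (by omega) (by omega) hq hC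
  have hBCq : pcomm (pcomm B C) q = 1 := by
    apply uG_pcomm_ge7 (a := 6) (b := 4) (by omega) (by omega) (by omega) ?_ hq
    exact uG_pcomm (by omega) (by omega) hB hC
  have e1 : p * B * q = p * (B * q) := by group
  rw [e1, pcomm_mul_left p (B*q) C, hpC]
  rw [pcomm_mul_left B q C, hqC, mul_one]
  have e2 : q⁻¹ * pcomm B C * q = pcomm B C * pcomm (pcomm B C) q :=
    conj_eq_mul_pcomm _ _
  calc (B * q)⁻¹ * (B * q) * (q⁻¹ * pcomm B C * q * 1)
      = q⁻¹ * pcomm B C * q := by group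
    _ = pcomm B C * pcomm (pcomm B C) q := e2
    _ = pcomm B C := by rw [hBCq, mul_one]

end Matrices


section Margins
variable {R : Type} [CommRing R]
local notation "GL7" => (Matrix (Fin 7) (Fin 7) R)ˣ

lemma msl0 {δ g0 g1 g2 g3 g4 g5 : GL7} (hδ : uG 2 δ)
    (h0 : uG 1 g0) (h1 : uG 1 g1) (h2 : uG 1 g2)
    (h3 : uG 1 g3) (h4 : uG 1 g4) (h5 : uG 1 g5) :
    n21W (mk6 (g0*δ) g1 g2 g3 g4 g5) = n21W (mk6 g0 g1 g2 g3 g4 g5) := by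
  rw [n21W_mk6, n21W_mk6]
  set X := pcomm g0 g1 with hX
  set B := pcomm X g2 with hB
  set C := pcomm (pcomm g3 g4) g5 with hC
  have hXu : uG 2 X := uG_pcomm (by omega) (by omega) h0 h1
  have hBu : uG 3 B := uG_pcomm (by omega) (by omega) hXu h2
  have hCu : uG 3 C :=
    uG_pcomm (by omega) (by omega) (uG_pcomm (by omega) (by omega) h3 h4) h5
  set y := pcomm X δ * pcomm δ g1 with hy
  have hyu : uG 3 y :=
    uG_mul ((uG_pcomm (by omega) (by omega) hXu hδ).mono (by omega))
      (uG_pcomm (by omega) (by omega) hδ h1)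
  have e1 : pcomm (g0*δ) g1 = X * y := by
    rw [hy, pcomm_mul_left g0 δ g1, ← hX, conj_eq_mul_pcomm X δ, mul_assoc]
  set q := pcomm B y * pcomm y g2 with hq
  have hqu : uG 4 q :=
    uG_mul ((uG_pcomm (by omega) (by omega) hBu hyu).mono (by omega))
      (uG_pcomm (by omega) (by omega) hyu h2)
  have e2 : pcomm (X * y) g2 = B * q := by
    rw [hq, pcomm_mul_left X y g2, ← hB, conj_eq_mul_pcomm B y, mul_assoc]
  rw [e1, e2]
  have hfin := FIN hBu hCu (uG_one 4) hqu
  rw [one_mul] at hfin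
  exact hfin

lemma msl1 {δ g0 g1 g2 g3 g4 g5 : GL7} (hδ : uG 2 δ)
    (h0 : uG 1 g0) (h1 : uG 1 g1) (h2 : uG 1 g2)
    (h3 : uG 1 g3) (h4 : uG 1 g4) (h5 : uG 1 g5) :
    n21W (mk6 g0 (g1*δ) g2 g3 g4 g5) = n21W (mk6 g0 g1 g2 g3 g4 g5) := by
  rw [n21W_mk6, n21W_mk6]
  set X := pcomm g0 g1 with hX
  set B := pcomm X g2 with hB
  set C := pcomm (pcomm g3 g4) g5 with hC
  have hXu : uG 2 X := uG_pcomm (by omega) (by omega) h0 h1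
  have hBu : uG 3 B := uG_pcomm (by omega) (by omega) hXu h2
  have hCu : uG 3 C :=
    uG_pcomm (by omega) (by omega) (uG_pcomm (by omega) (by omega) h3 h4) h5
  set u := pcomm g0 δ with hu
  set w := pcomm X δ with hw
  have huu : uG 3 u := uG_pcomm (by omega) (by omega) h0 hδ
  have hwu : uG 4 w := uG_pcomm (by omega) (by omega) hXu hδ
  have e1 : pcomm g0 (g1*δ) = u * (X * w) := by
    rw [hu, hw, pcomm_mul_right g0 g1 δ, ← hX, conj_eq_mul_pcomm X δ]
  have hXwu : uG 1 (X * w) := uG_mul (hXu.mono (by omega)) (hwu.mono (by omega))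
  set p := pcomm u g2 * pcomm (pcomm u g2) (X*w) with hp
  have hpu : uG 4 p := by
    apply uG_mul (uG_pcomm (by omega) (by omega) huu h2)
    exact (uG_pcomm (by omega) (by omega)
      (uG_pcomm (by omega) (by omega) huu h2) hXwu).mono (by omega)
  have hBw1 : pcomm B w = 1 := uG_pcomm_ge7 (by omega) (by omega) (by omega) hBu hwu
  have e2 : pcomm (u * (X * w)) g2 = p * B * pcomm w g2 := by
    rw [hp, pcomm_mul_left u (X*w) g2, conj_eq_mul_pcomm (pcomm u g2) (X*w)]
    rw [pcomm_mul_left X w g2, ← hB, conj_eq_mul_pcomm B w, hBw1, mul_one]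
    group
  have hq2 : uG 4 (pcomm w g2) :=
    (uG_pcomm (by omega) (by omega) hwu h2).mono (by omega)
  rw [e1, e2]
  exact FIN hBu hCu hpu hq2

lemma msl2 {δ g0 g1 g2 g3 g4 g5 : GL7} (hδ : uG 2 δ)
    (h0 : uG 1 g0) (h1 : uG 1 g1) (h2 : uG 1 g2)
    (h3 : uG 1 g3) (h4 : uG 1 g4) (h5 : uG 1 g5) :
    n21W (mk6 g0 g1 (g2*δ) g3 g4 g5) = n21W (mk6 g0 g1 g2 g3 g4 g5) := by
  rw [n21W_mk6, n21W_mk6]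
  set X := pcomm g0 g1 with hX
  set B := pcomm X g2 with hB
  set C := pcomm (pcomm g3 g4) g5 with hC
  have hXu : uG 2 X := uG_pcomm (by omega) (by omega) h0 h1
  have hBu : uG 3 B := uG_pcomm (by omega) (by omega) hXu h2
  have hCu : uG 3 C :=
    uG_pcomm (by omega) (by omega) (uG_pcomm (by omega) (by omega) h3 h4) h5
  have hpu : uG 4 (pcomm X δ) := uG_pcomm (by omega) (by omega) hXu hδ
  have hqu : uG 4 (pcomm B δ) :=
    (uG_pcomm (by omega) (by omega) hBu hδ).mono (by omega)
  have e1 : pcomm X (g2*δ) = pcomm X δ * B * pcomm B δ := by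
    rw [pcomm_mul_right X g2 δ, ← hB, conj_eq_mul_pcomm B δ]
    group
  rw [e1]
  exact FIN hBu hCu hpu hqu

lemma msl3 {δ g0 g1 g2 g3 g4 g5 : GL7} (hδ : uG 2 δ)
    (h0 : uG 1 g0) (h1 : uG 1 g1) (h2 : uG 1 g2)
    (h3 : uG 1 g3) (h4 : uG 1 g4) (h5 : uG 1 g5) :
    n21W (mk6 g0 g1 g2 (g3*δ) g4 g5) = n21W (mk6 g0 g1 g2 g3 g4 g5) := by
  rw [n21W_swap g0 g1 g2 (g3*δ) g4 g5, msl0 hδ h3 h4 h5 h0 h1 h2,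
    ← n21W_swap g0 g1 g2 g3 g4 g5]

lemma msl4 {δ g0 g1 g2 g3 g4 g5 : GL7} (hδ : uG 2 δ)
    (h0 : uG 1 g0) (h1 : uG 1 g1) (h2 : uG 1 g2)
    (h3 : uG 1 g3) (h4 : uG 1 g4) (h5 : uG 1 g5) :
    n21W (mk6 g0 g1 g2 g3 (g4*δ) g5) = n21W (mk6 g0 g1 g2 g3 g4 g5) := by
  rw [n21W_swap g0 g1 g2 g3 (g4*δ) g5, msl1 hδ h3 h4 h5 h0 h1 h2,
    ← n21W_swap g0 g1 g2 g3 g4 g5]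

lemma msl5 {δ g0 g1 g2 g3 g4 g5 : GL7} (hδ : uG 2 δ)
    (h0 : uG 1 g0) (h1 : uG 1 g1) (h2 : uG 1 g2)
    (h3 : uG 1 g3) (h4 : uG 1 g4) (h5 : uG 1 g5) :
    n21W (mk6 g0 g1 g2 g3 g4 (g5*δ)) = n21W (mk6 g0 g1 g2 g3 g4 g5) := by
  rw [n21W_swap g0 g1 g2 g3 g4 (g5*δ), msl2 hδ h3 h4 h5 h0 h1 h2,
    ← n21W_swap g0 g1 g2 g3 g4 g5]

lemma matrix_margin {δ : GL7} (hδ : uG 2 δ) (g : Fin 6 → GL7)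
    (hg : ∀ j, uG 1 (g j)) (i : Fin 6) :
    n21W (Function.update g i (g i * δ)) = n21W g := by
  fin_cases i
  · exact msl0 hδ (hg 0) (hg 1) (hg 2) (hg 3) (hg 4) (hg 5)
  · exact msl1 hδ (hg 0) (hg 1) (hg 2) (hg 3) (hg 4) (hg 5)
  · exact msl2 hδ (hg 0) (hg 1) (hg 2) (hg 3) (hg 4) (hg 5)
  · exact msl3 hδ (hg 0) (hg 1) (hg 2) (hg 3) (hg 4) (hg 5)
  · exact msl4 hδ (hg 0) (hg 1) (hg 2) (hg 3) (hg 4) (hg 5)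
  · exact msl5 hδ (hg 0) (hg 1) (hg 2) (hg 3) (hg 4) (hg 5)

end Margins


section CleanVal
variable {R : Type} [CommRing R]
local notation "GL7" => (Matrix (Fin 7) (Fin 7) R)ˣ
local notation "M7" => Matrix (Fin 7) (Fin 7) R

def sdM (v : Fin 6 → R) : Matrix (Fin 7) (Fin 7) R :=
  !![0, v 0, 0, 0, 0, 0, 0;
     0, 0, v 1, 0, 0, 0, 0;
     0, 0, 0, v 2, 0, 0, 0;
     0, 0, 0, 0, v 3, 0, 0;
     0, 0, 0, 0, 0, v 4, 0;
     0, 0, 0, 0, 0, 0, v 5;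
     0, 0, 0, 0, 0, 0, 0]

lemma sdM_lv1 (v : Fin 6 → R) : Lv 1 (sdM v) := by
  intro i j hij
  fin_cases i <;> fin_cases j <;> first | rfl | (exfalso; simp at hij)

def clU (v : Fin 6 → R) : GL7 := upOf (sdM v) (sdM_lv1 v)

lemma clU_val (v : Fin 6 → R) : ((clU v : GL7) : M7) = 1 + sdM v := rfl

lemma clU_uG1 (v : Fin 6 → R) : uG 1 (clU v) := by
  unfold uG
  rw [clU_val, add_sub_cancel_left]
  exact sdM_lv1 v

def Wm (α β : Fin 6 → R) : M7 := sdM α * sdM β - sdM β * sdM α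

def TBm (α β γ : Fin 6 → R) : M7 := Wm α β * sdM γ - sdM γ * Wm α β

lemma Wm_lv2 (α β : Fin 6 → R) : Lv 2 (Wm α β) :=
  ((sdM_lv1 α).mul (sdM_lv1 β)).sub ((sdM_lv1 β).mul (sdM_lv1 α))

lemma TBm_lv3 (α β γ : Fin 6 → R) : Lv 3 (TBm α β γ) :=
  ((Wm_lv2 α β).mul (sdM_lv1 γ)).sub (((sdM_lv1 γ).mul (Wm_lv2 α β)).mono (by omega))

lemma prod_inv_sub_one_lv1 {x y : GL7} (hx : uG 1 x) (hy : uG 1 y) :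
    Lv 1 (((x⁻¹ : GL7) : M7) * ((y⁻¹ : GL7) : M7) - 1) := by
  have ha : uG 1 (x⁻¹ * y⁻¹) := uG_mul (uG_inv (le_refl 1) hx) (uG_inv (le_refl 1) hy)
  have : ((x⁻¹ * y⁻¹ : GL7) : M7) = ((x⁻¹ : GL7) : M7) * ((y⁻¹ : GL7) : M7) :=
    Units.val_mul _ _
  rw [← this]
  exact ha

lemma X_approx (α β : Fin 6 → R) :
    Lv 3 (((pcomm (clU α) (clU β) : GL7) : M7) - 1 - Wm α β) := by
  have hval := pcomm_val (clU α) (clU β)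
  have hS : ((clU α : GL7) : M7) * ((clU β : GL7) : M7)
      - ((clU β : GL7) : M7) * ((clU α : GL7) : M7) = Wm α β := by
    rw [clU_val, clU_val]
    unfold Wm
    noncomm_ring
  rw [hval, hS]
  have key : (((clU α)⁻¹ : GL7) : M7) * (((clU β)⁻¹ : GL7) : M7) * Wm α β - Wm α β
      = ((((clU α)⁻¹ : GL7) : M7) * (((clU β)⁻¹ : GL7) : M7) - 1) * Wm α β := by
    noncomm_ring
  rw [key]
  exact ((prod_inv_sub_one_lv1 (clU_uG1 α) (clU_uG1 β)).mul (Wm_lv2 α β)).mono (by omega)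

lemma X_uG2 (α β : Fin 6 → R) : uG 2 (pcomm (clU α) (clU β)) :=
  uG_pcomm (by omega) (by omega) (clU_uG1 α) (clU_uG1 β)

lemma B_uG3 (α β γ : Fin 6 → R) : uG 3 (pcomm (pcomm (clU α) (clU β)) (clU γ)) :=
  uG_pcomm (by omega) (by omega) (X_uG2 α β) (clU_uG1 γ)

lemma B_approx (α β γ : Fin 6 → R) :
    Lv 4 (((pcomm (pcomm (clU α) (clU β)) (clU γ) : GL7) : M7) - 1 - TBm α β γ) := by
  set X := pcomm (clU α) (clU β) with hXdef
  have hval := pcomm_val X (clU γ)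
  set Xv := ((X : GL7) : M7) with hXv
  set P := ((X⁻¹ : GL7) : M7) * (((clU γ)⁻¹ : GL7) : M7) with hP
  set S := Xv * ((clU γ : GL7) : M7) - ((clU γ : GL7) : M7) * Xv with hS
  set EX := Xv - 1 - Wm α β with hEX
  have hEX3 : Lv 3 EX := X_approx α β
  have hSdec : S = TBm α β γ + (EX * sdM γ - sdM γ * EX) := by
    rw [hS, hEX, clU_val]
    unfold TBm Wm
    noncomm_ring
  have hP1 : Lv 1 (P - 1) := prod_inv_sub_one_lv1 ((X_uG2 α β).mono (by omega)) (clU_uG1 γ)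
  have hkey : ((pcomm X (clU γ) : GL7) : M7) - 1 - TBm α β γ
      = (P - 1) * S + (EX * sdM γ - sdM γ * EX) := by
    rw [hval, hSdec]
    noncomm_ring
  rw [hkey]
  have hS3 : Lv 3 S := by
    rw [hSdec]
    exact (TBm_lv3 α β γ).add
      (((hEX3.mul (sdM_lv1 γ)).sub (((sdM_lv1 γ).mul hEX3).mono (by omega))).mono (by omega))
  exact (((hP1.mul hS3).mono (by omega))).add
    ((hEX3.mul (sdM_lv1 γ)).sub (((sdM_lv1 γ).mul hEX3).mono (by omega)))

lemma top_exact {B C : GL7} (hB : uG 3 B) (hC : uG 3 C) :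
    ((pcomm B C : GL7) : M7)
      = 1 + ((((B : GL7) : M7) - 1) * (((C : GL7) : M7) - 1)
          - (((C : GL7) : M7) - 1) * (((B : GL7) : M7) - 1)) := by
  have hval := pcomm_val B C
  set S := ((B : GL7) : M7) * ((C : GL7) : M7) - ((C : GL7) : M7) * ((B : GL7) : M7)
    with hS
  have hSdec : S = (((B : GL7) : M7) - 1) * (((C : GL7) : M7) - 1)
      - (((C : GL7) : M7) - 1) * (((B : GL7) : M7) - 1) := by
    rw [hS]; noncomm_ring
  have hS6 : Lv 6 S := by
    rw [hSdec]
    exact (hB.mul hC).sub ((hC.mul hB).mono (by omega))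
  have hP1 : Lv 1 (((B⁻¹ : GL7) : M7) * ((C⁻¹ : GL7) : M7) - 1) :=
    prod_inv_sub_one_lv1 (hB.mono (by omega)) (hC.mono (by omega))
  have hz : ((((B⁻¹ : GL7) : M7) * ((C⁻¹ : GL7) : M7)) - 1) * S = 0 :=
    Lv.eq_zero ((hP1.mul hS6).mono (by omega))
  have h2 : ((pcomm B C : GL7) : M7) - 1 = S := by
    rw [hval]
    have h3 : ((B⁻¹ : GL7) : M7) * ((C⁻¹ : GL7) : M7) * S
        = S + ((((B⁻¹ : GL7) : M7) * ((C⁻¹ : GL7) : M7)) - 1) * S := by noncomm_ring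
    rw [h3, hz, add_zero]
  have h4 := sub_eq_iff_eq_add.mp h2
  rw [h4, hSdec]
  abel

lemma entry_mul_06 {P Q : M7} (hP : Lv 3 P) (hQ : Lv 3 Q) :
    (P * Q) 0 6 = P 0 3 * Q 3 6 := by
  rw [Matrix.mul_apply, Fin.sum_univ_seven]
  rw [hP 0 0 (by decide), hP 0 1 (by decide), hP 0 2 (by decide),
    hQ 4 6 (by decide), hQ 5 6 (by decide), hQ 6 6 (by decide)]
  simp

lemma Bval_03 (α β γ : Fin 6 → R) :
    (((pcomm (pcomm (clU α) (clU β)) (clU γ) : GL7) : M7) - 1) 0 3 = TBm α β γ 0 3 := by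
  have h := B_approx α β γ 0 3 (by decide)
  rw [Matrix.sub_apply] at h
  exact sub_eq_zero.mp h

lemma Bval_36 (α β γ : Fin 6 → R) :
    (((pcomm (pcomm (clU α) (clU β)) (clU γ) : GL7) : M7) - 1) 3 6 = TBm α β γ 3 6 := by
  have h := B_approx α β γ 3 6 (by decide)
  rw [Matrix.sub_apply] at h
  exact sub_eq_zero.mp h

lemma clean_entry (α β γ δ ε ζ : Fin 6 → R) :
    ((n21W (mk6 (clU α) (clU β) (clU γ) (clU δ) (clU ε) (clU ζ)) : GL7) : M7) 0 6
      = TBm α β γ 0 3 * TBm δ ε ζ 3 6 - TBm δ ε ζ 0 3 * TBm α β γ 3 6 := by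
  rw [n21W_mk6]
  rw [top_exact (B_uG3 α β γ) (B_uG3 δ ε ζ)]
  rw [Matrix.add_apply, Matrix.sub_apply]
  rw [entry_mul_06 (B_uG3 α β γ) (B_uG3 δ ε ζ), entry_mul_06 (B_uG3 δ ε ζ) (B_uG3 α β γ)]
  rw [Bval_03, Bval_36, Bval_03, Bval_36]
  rw [Matrix.one_apply_ne (by decide)]
  ring

lemma vec7_app6 (a b c d e f g : R) : ![a,b,c,d,e,f,g] (6 : Fin 7) = g := rfl
lemma vec7_app5 (a b c d e f g : R) : ![a,b,c,d,e,f,g] (5 : Fin 7) = f := rfl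
lemma vec7_app4 (a b c d e f g : R) : ![a,b,c,d,e,f,g] (4 : Fin 7) = e := rfl
lemma vec7_app3 (a b c d e f g : R) : ![a,b,c,d,e,f,g] (3 : Fin 7) = d := rfl

lemma TBm_03_val (α β γ : Fin 6 → R) :
    TBm α β γ 0 3 = (α 0 * β 1 - β 0 * α 1) * γ 2 - γ 0 * (α 1 * β 2 - β 1 * α 2) := by
  unfold TBm Wm sdM
  simp [Matrix.mul_apply, Fin.sum_univ_seven, vec7_app3, vec7_app4, vec7_app5, vec7_app6]

lemma TBm_36_val (α β γ : Fin 6 → R) :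
    TBm α β γ 3 6 = (α 3 * β 4 - β 3 * α 4) * γ 5 - γ 3 * (α 4 * β 5 - β 4 * α 5) := by
  unfold TBm Wm sdM
  simp [Matrix.mul_apply, Fin.sum_univ_seven, vec7_app3, vec7_app4, vec7_app5, vec7_app6]

end CleanVal


section Build

variable (N : ℕ) [NeZero N] {k : ℕ} (n : Fin k → ℕ)

def psi (hd : ∀ t, n t ∣ N) (t : Fin k) : ZMod (n t) →+ ZMod N :=
  ZMod.lift (n t)
    ⟨(AddMonoidHom.mulLeft (((N / n t : ℕ)) : ZMod N)).comp (Int.castAddHom (ZMod N)), by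
      show ((N / n t : ℕ) : ZMod N) * (((n t : ℕ) : ℤ) : ZMod N) = 0
      rw [show (((n t : ℕ) : ℤ) : ZMod N) = ((n t : ℕ) : ZMod N) by push_cast; rfl]
      rw [show ((N / n t : ℕ) : ZMod N) * ((n t : ℕ) : ZMod N) = ((N / n t * n t : ℕ) : ZMod N) by
        push_cast; ring]
      rw [Nat.div_mul_cancel (hd t), ZMod.natCast_self]⟩

lemma psi_nat (hd : ∀ t, n t ∣ N) (t : Fin k) (x : ℕ) :
    psi N n hd t ((x : ℕ) : ZMod (n t)) = ((N / n t * x : ℕ) : ZMod N) := by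
  have h1 : ((x : ℕ) : ZMod (n t)) = ((x : ℤ) : ZMod (n t)) := by push_cast; rfl
  rw [h1]
  unfold psi
  rw [ZMod.lift_coe]
  show ((N / n t : ℕ) : ZMod N) * (((x : ℕ) : ℤ) : ZMod N) = _
  rw [show (((x : ℕ) : ℤ) : ZMod N) = ((x : ℕ) : ZMod N) by push_cast; rfl]
  push_cast
  ring

lemma psi_inj (hd : ∀ t, n t ∣ N) (t : Fin k) (hnt : 0 < n t) (x : ZMod (n t))
    (hx : psi N n hd t x = 0) : x = 0 := by
  haveI : NeZero (n t) := ⟨by omega⟩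
  have h1 : x = ((x.val : ℕ) : ZMod (n t)) := (ZMod.natCast_rightInverse x).symm
  rw [h1, psi_nat] at hx
  have h2 : N ∣ N / n t * x.val := (ZMod.natCast_eq_zero_iff _ _).mp hx
  have h3 : N / n t * n t ∣ N / n t * x.val := by
    rwa [Nat.div_mul_cancel (hd t)]
  have h4 : 0 < N / n t := Nat.div_pos (Nat.le_of_dvd (by have := NeZero.pos N; omega) (hd t)) hnt
  have h5 : n t ∣ x.val := (mul_dvd_mul_iff_left (by omega : N / n t ≠ 0)).mp h3
  have h6 : x.val < n t := ZMod.val_lt x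
  have h7 : x.val = 0 := by
    rcases Nat.eq_zero_of_dvd_of_lt h5 h6 with h; exact h
  rw [h1, h7]
  simp

lemma psi_one (hd : ∀ t, n t ∣ N) (t : Fin k) :
    psi N n hd t (1 : ZMod (n t)) = ((N / n t : ℕ) : ZMod N) := by
  have h1 : (1 : ZMod (n t)) = ((1 : ℕ) : ZMod (n t)) := by push_cast; rfl
  rw [h1, psi_nat]
  norm_num

def evh (hd : ∀ t, n t ∣ N) (c : Fin k) : ((i : Fin k) → ZMod (n i)) →+ ZMod N :=
  (psi N n hd c).comp (Pi.evalAddMonoidHom (fun i => ZMod (n i)) c)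

lemma evh_apply (hd : ∀ t, n t ∣ N) (c : Fin k) (ξ : (i : Fin k) → ZMod (n i)) :
    evh N n hd c ξ = psi N n hd c (ξ c) := rfl

def tbl (hd : ∀ t, n t ∣ N) (i0 i1 : Fin k) (c : Fin k) :
    Fin 6 → (((i : Fin k) → ZMod (n i)) →+ ZMod N) :=
  if c = i0 then
    ![evh N n hd i0, evh N n hd i1, evh N n hd i1, evh N n hd i1, evh N n hd i0, evh N n hd i0]
  else if c = i1 then
    ![evh N n hd i1, evh N n hd i0, evh N n hd i0, evh N n hd i0, evh N n hd i1, evh N n hd i1]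
  else
    ![evh N n hd c, evh N n hd i0, evh N n hd i1, evh N n hd i0, evh N n hd i1, evh N n hd i1]

lemma tbl_zero (hd : ∀ t, n t ∣ N) (i0 i1 : Fin k) (c : Fin k) :
    tbl N n hd i0 i1 c 0 = evh N n hd c := by
  unfold tbl
  by_cases h0 : c = i0
  · rw [if_pos h0, h0]; rfl
  · rw [if_neg h0]
    by_cases h1 : c = i1
    · rw [if_pos h1, h1]; rfl
    · rw [if_neg h1]; rfl

def lam (hd : ∀ t, n t ∣ N) (i0 i1 : Fin k) (ξ : (i : Fin k) → ZMod (n i)) :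
    Fin 6 → (Fin k → ZMod N) :=
  fun p c => tbl N n hd i0 i1 c p ξ

lemma lam_add (hd : ∀ t, n t ∣ N) (i0 i1 : Fin k) (ξ ξ' : (i : Fin k) → ZMod (n i)) :
    lam N n hd i0 i1 (ξ + ξ') = lam N n hd i0 i1 ξ + lam N n hd i0 i1 ξ' := by
  funext p c
  show tbl N n hd i0 i1 c p (ξ + ξ') = _
  rw [map_add]
  rfl

lemma lam_zero (hd : ∀ t, n t ∣ N) (i0 i1 : Fin k) :
    lam N n hd i0 i1 0 = 0 := by
  funext p c
  show tbl N n hd i0 i1 c p 0 = 0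
  rw [map_zero]

lemma lam_neg (hd : ∀ t, n t ∣ N) (i0 i1 : Fin k) (ξ : (i : Fin k) → ZMod (n i)) :
    lam N n hd i0 i1 (-ξ) = -(lam N n hd i0 i1 ξ) := by
  funext p c
  show tbl N n hd i0 i1 c p (-ξ) = _
  rw [map_neg]
  rfl

lemma lam_inj (hd : ∀ t, n t ∣ N) (i0 i1 : Fin k) (hn2 : ∀ t, 0 < n t)
    (ξ : (i : Fin k) → ZMod (n i)) (h : lam N n hd i0 i1 ξ = 0) : ξ = 0 := by
  funext c
  have h1 : lam N n hd i0 i1 ξ 0 c = 0 := by rw [h]; rfl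
  have h2 : tbl N n hd i0 i1 c 0 ξ = 0 := h1
  rw [tbl_zero, evh_apply] at h2
  exact psi_inj N n hd c (hn2 c) _ h2

end Build


section Build2

variable {N : ℕ} [NeZero N] {k : ℕ}

def sdiag (p : Fin 6) (x : (Matrix (Fin 7) (Fin 7) (Fin k → ZMod N))ˣ) : Fin k → ZMod N :=
  ((x : (Matrix (Fin 7) (Fin 7) (Fin k → ZMod N))ˣ) : Matrix (Fin 7) (Fin 7) (Fin k → ZMod N))
    p.castSucc p.succ

lemma one_entry_sd (p : Fin 6) :
    (1 : Matrix (Fin 7) (Fin 7) (Fin k → ZMod N)) p.castSucc p.succ = 0 := by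
  apply Matrix.one_apply_ne
  intro h
  have h2 := congrArg Fin.val h
  simp [Fin.coe_castSucc, Fin.val_succ] at h2

lemma lv2_entry_zero {A : Matrix (Fin 7) (Fin 7) (Fin k → ZMod N)} (hA : Lv 2 A) (p : Fin 6) :
    A p.castSucc p.succ = 0 := by
  apply hA
  simp [Fin.coe_castSucc, Fin.val_succ]

lemma sdiag_one (p : Fin 6) :
    sdiag p (1 : (Matrix (Fin 7) (Fin 7) (Fin k → ZMod N))ˣ) = 0 := by
  unfold sdiag
  rw [Units.val_one]
  exact one_entry_sd p

lemma sdiag_mul {x y : (Matrix (Fin 7) (Fin 7) (Fin k → ZMod N))ˣ}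
    (hx : uG 1 x) (hy : uG 1 y) (p : Fin 6) :
    sdiag p (x*y) = sdiag p x + sdiag p y := by
  have key : ((x*y : (Matrix (Fin 7) (Fin 7) (Fin k → ZMod N))ˣ) :
      Matrix (Fin 7) (Fin 7) (Fin k → ZMod N)) - 1
      = ((x : Matrix (Fin 7) (Fin 7) (Fin k → ZMod N)) - 1)
        * ((y : Matrix (Fin 7) (Fin 7) (Fin k → ZMod N)) - 1)
        + ((x : Matrix (Fin 7) (Fin 7) (Fin k → ZMod N)) - 1)
        + ((y : Matrix (Fin 7) (Fin 7) (Fin k → ZMod N)) - 1) := by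
    rw [Units.val_mul]; noncomm_ring
  have h := congrArg (fun A => A p.castSucc p.succ) key
  simp only [Matrix.sub_apply, Matrix.add_apply] at h
  rw [lv2_entry_zero (hx.mul hy) p, one_entry_sd p] at h
  unfold sdiag
  have h2 : ((x*y : (Matrix (Fin 7) (Fin 7) (Fin k → ZMod N))ˣ) :
      Matrix (Fin 7) (Fin 7) (Fin k → ZMod N)) p.castSucc p.succ - 0
      = 0 + (((x : Matrix (Fin 7) (Fin 7) (Fin k → ZMod N))) p.castSucc p.succ - 0)
        + (((y : Matrix (Fin 7) (Fin 7) (Fin k → ZMod N))) p.castSucc p.succ - 0) := h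
  rw [sub_zero, sub_zero, sub_zero, zero_add] at h2
  exact h2

variable (N) (n : Fin k → ℕ)

def Esub (hd : ∀ t, n t ∣ N) (i0 i1 : Fin k) :
    Subgroup (Matrix (Fin 7) (Fin 7) (Fin k → ZMod N))ˣ where
  carrier := {x | uG 1 x ∧ ∃ ξ : (i : Fin k) → ZMod (n i),
    ∀ p : Fin 6, sdiag p x = lam N n hd i0 i1 ξ p}
  one_mem' := by
    refine ⟨uG_one 1, 0, fun p => ?_⟩
    rw [sdiag_one, lam_zero]
    rfl
  mul_mem' := by
    rintro x y ⟨hx1, ξx, hxs⟩ ⟨hy1, ξy, hys⟩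
    refine ⟨uG_mul hx1 hy1, ξx + ξy, fun p => ?_⟩
    rw [sdiag_mul hx1 hy1, hxs p, hys p, lam_add]
    rfl
  inv_mem' := by
    rintro x ⟨hx1, ξx, hxs⟩
    refine ⟨uG_inv (le_refl 1) hx1, -ξx, fun p => ?_⟩
    have h := sdiag_mul hx1 (uG_inv (le_refl 1) hx1) p
    rw [mul_inv_cancel, sdiag_one] at h
    have h2 : sdiag p x⁻¹ = -(sdiag p x) := by
      have h3 := h.symm
      rw [add_eq_zero_iff_eq_neg] at h3
      rw [h3]
      abel
    rw [h2, hxs p, lam_neg]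
    rfl

end Build2


section Build3

variable (N : ℕ) [NeZero N] {k : ℕ} (n : Fin k → ℕ) (hd : ∀ t, n t ∣ N) (i0 i1 : Fin k)

lemma mem_Esub {x : (Matrix (Fin 7) (Fin 7) (Fin k → ZMod N))ˣ} :
    x ∈ Esub N n hd i0 i1 ↔ uG 1 x ∧ ∃ ξ : (i : Fin k) → ZMod (n i),
      ∀ p : Fin 6, sdiag p x = lam N n hd i0 i1 ξ p := Iff.rfl

lemma lam_inj2 (hn2 : ∀ t, 0 < n t) {ξ ξ' : (i : Fin k) → ZMod (n i)}
    (h : lam N n hd i0 i1 ξ = lam N n hd i0 i1 ξ') : ξ = ξ' := by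
  have h1 : lam N n hd i0 i1 (ξ - ξ') = 0 := by
    rw [sub_eq_add_neg, lam_add, lam_neg, h]
    abel
  have h2 := lam_inj N n hd i0 i1 hn2 _ h1
  exact sub_eq_zero.mp h2

noncomputable def xi (x : ↥(Esub N n hd i0 i1)) : (i : Fin k) → ZMod (n i) :=
  Classical.choose ((mem_Esub N n hd i0 i1).mp x.2).2

lemma xi_spec (x : ↥(Esub N n hd i0 i1)) :
    ∀ p, sdiag p (x : (Matrix (Fin 7) (Fin 7) (Fin k → ZMod N))ˣ)
      = lam N n hd i0 i1 (xi N n hd i0 i1 x) p :=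
  Classical.choose_spec ((mem_Esub N n hd i0 i1).mp x.2).2

lemma xi_unique (hn2 : ∀ t, 0 < n t) (x : ↥(Esub N n hd i0 i1)) (ξ : (i : Fin k) → ZMod (n i))
    (h : ∀ p, sdiag p (x : (Matrix (Fin 7) (Fin 7) (Fin k → ZMod N))ˣ)
      = lam N n hd i0 i1 ξ p) : xi N n hd i0 i1 x = ξ := by
  apply lam_inj2 N n hd i0 i1 hn2
  funext p
  rw [← xi_spec N n hd i0 i1 x p, h p]

lemma uG1_of_mem {x : (Matrix (Fin 7) (Fin 7) (Fin k → ZMod N))ˣ}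
    (hx : x ∈ Esub N n hd i0 i1) : uG 1 x := ((mem_Esub N n hd i0 i1).mp hx).1

noncomputable def theta (hn2 : ∀ t, 0 < n t) :
    ↥(Esub N n hd i0 i1) →* Multiplicative ((i : Fin k) → ZMod (n i)) where
  toFun x := Multiplicative.ofAdd (xi N n hd i0 i1 x)
  map_one' := by
    have h1 : xi N n hd i0 i1 1 = 0 := by
      apply xi_unique N n hd i0 i1 hn2
      intro p
      have : ((1 : ↥(Esub N n hd i0 i1)) : (Matrix (Fin 7) (Fin 7) (Fin k → ZMod N))ˣ)
          = 1 := rfl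
      rw [this, sdiag_one, lam_zero]
      rfl
    show Multiplicative.ofAdd (xi N n hd i0 i1 1) = 1
    rw [h1]
    rfl
  map_mul' x y := by
    have hx1 := uG1_of_mem N n hd i0 i1 x.2
    have hy1 := uG1_of_mem N n hd i0 i1 y.2
    have h1 : xi N n hd i0 i1 (x*y) = xi N n hd i0 i1 x + xi N n hd i0 i1 y := by
      apply xi_unique N n hd i0 i1 hn2
      intro p
      have hco : ((x*y : ↥(Esub N n hd i0 i1)) : (Matrix (Fin 7) (Fin 7) (Fin k → ZMod N))ˣ)
          = (x : (Matrix (Fin 7) (Fin 7) (Fin k → ZMod N))ˣ)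
            * (y : (Matrix (Fin 7) (Fin 7) (Fin k → ZMod N))ˣ) := rfl
      rw [hco, sdiag_mul hx1 hy1, xi_spec N n hd i0 i1 x p, xi_spec N n hd i0 i1 y p,
        lam_add]
      rfl
    show Multiplicative.ofAdd (xi N n hd i0 i1 (x*y)) = _
    rw [h1]
    rfl

lemma sdM_entry (v : Fin 6 → (Fin k → ZMod N)) (p : Fin 6) :
    sdM v p.castSucc p.succ = v p := by
  fin_cases p <;> rfl

lemma sdiag_clU (v : Fin 6 → (Fin k → ZMod N)) (p : Fin 6) :
    sdiag p (clU v) = v p := by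
  unfold sdiag
  rw [clU_val, Matrix.add_apply, one_entry_sd, sdM_entry, zero_add]

lemma clU_mem (ξ : (i : Fin k) → ZMod (n i)) :
    clU (lam N n hd i0 i1 ξ) ∈ Esub N n hd i0 i1 := by
  refine ⟨clU_uG1 _, ξ, fun p => ?_⟩
  rw [sdiag_clU]

lemma theta_clU (hn2 : ∀ t, 0 < n t) (ξ : (i : Fin k) → ZMod (n i)) :
    theta N n hd i0 i1 hn2 ⟨clU (lam N n hd i0 i1 ξ), clU_mem N n hd i0 i1 ξ⟩
      = Multiplicative.ofAdd ξ := by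
  show Multiplicative.ofAdd (xi N n hd i0 i1 _) = _
  rw [xi_unique N n hd i0 i1 hn2 _ ξ (fun p => by rw [sdiag_clU])]

lemma theta_surj (hn2 : ∀ t, 0 < n t) : Function.Surjective (theta N n hd i0 i1 hn2) := by
  intro q
  refine ⟨⟨clU (lam N n hd i0 i1 (Multiplicative.toAdd q)), clU_mem N n hd i0 i1 _⟩, ?_⟩
  rw [theta_clU N n hd i0 i1 hn2]
  simp

lemma mem_ker_iff (hn2 : ∀ t, 0 < n t) (x : ↥(Esub N n hd i0 i1)) :
    x ∈ (theta N n hd i0 i1 hn2).ker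
      ↔ ∀ p, sdiag p (x : (Matrix (Fin 7) (Fin 7) (Fin k → ZMod N))ˣ) = 0 := by
  rw [MonoidHom.mem_ker]
  constructor
  · intro h p
    have h1 : xi N n hd i0 i1 x = 0 := by
      have h2 : Multiplicative.ofAdd (xi N n hd i0 i1 x) = 1 := h
      have h3 := congrArg Multiplicative.toAdd h2
      simpa using h3
    rw [xi_spec N n hd i0 i1 x p, h1, lam_zero]
    rfl
  · intro h
    show Multiplicative.ofAdd (xi N n hd i0 i1 x) = 1
    rw [xi_unique N n hd i0 i1 hn2 _ 0 (fun p => by rw [h p, lam_zero]; rfl)]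
    rfl

lemma uG2_of_sdiag_zero {x : (Matrix (Fin 7) (Fin 7) (Fin k → ZMod N))ˣ}
    (hx : uG 1 x) (h : ∀ p : Fin 6, sdiag p x = 0) : uG 2 x := by
  intro i j hij
  by_cases hj1 : (j:ℕ) < (i:ℕ) + 1
  · exact hx i j hj1
  · have hj2 : (j:ℕ) = (i:ℕ) + 1 := by omega
    have hi6 : (i:ℕ) < 6 := by have := j.2; omega
    set p : Fin 6 := ⟨(i:ℕ), hi6⟩ with hp
    have hcs : p.castSucc = i := by
      apply Fin.ext
      simp [hp]
    have hsc : p.succ = j := by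
      apply Fin.ext
      simp [hp, Fin.val_succ]
      omega
    have h2 := h p
    unfold sdiag at h2
    rw [hcs, hsc] at h2
    rw [Matrix.sub_apply, h2, Matrix.one_apply_ne, sub_zero]
    intro hc
    subst hc
    omega

end Build3


section Build4

lemma map_pcomm {M M' : Type} [Group M] [Group M'] (f : M →* M') (a b : M) :
    f (pcomm a b) = pcomm (f a) (f b) := by simp [pcomm]

lemma map_n21W {M M' : Type} [Group M] [Group M'] (f : M →* M') (g : Fin 6 → M) :
    f (n21W g) = n21W (fun j => f (g j)) := by
  simp [n21W, map_pcomm]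

lemma comp_update {A B : Type*} [DecidableEq (Fin 6)] (f : A → B) (g : Fin 6 → A)
    (i : Fin 6) (z : A) :
    (fun j => f (Function.update g i z j)) = Function.update (fun j => f (g j)) i (f z) := by
  funext j
  by_cases hj : j = i
  · subst hj; simp
  · simp [Function.update_of_ne hj]

lemma coe_mk6_hom {M M' : Type} [Group M] [Group M'] (f : M →* M') (a b c d e g : M) :
    (fun j => f (mk6 a b c d e g j)) = mk6 (f a) (f b) (f c) (f d) (f e) (f g) := by
  funext j
  fin_cases j <;> rfl

lemma vec6h_app0 {A : Type*} (a b c d e f : A) : ![a,b,c,d,e,f] (0 : Fin 6) = a := rfl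
lemma vec6h_app1 {A : Type*} (a b c d e f : A) : ![a,b,c,d,e,f] (1 : Fin 6) = b := rfl
lemma vec6h_app2 {A : Type*} (a b c d e f : A) : ![a,b,c,d,e,f] (2 : Fin 6) = c := rfl
lemma vec6h_app3 {A : Type*} (a b c d e f : A) : ![a,b,c,d,e,f] (3 : Fin 6) = d := rfl
lemma vec6h_app4 {A : Type*} (a b c d e f : A) : ![a,b,c,d,e,f] (4 : Fin 6) = e := rfl
lemma vec6h_app5 {A : Type*} (a b c d e f : A) : ![a,b,c,d,e,f] (5 : Fin 6) = f := rfl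

variable (N : ℕ) [NeZero N] {k : ℕ} (n : Fin k → ℕ) (hd : ∀ t, n t ∣ N) (i0 i1 : Fin k)

lemma lam_apply (ξ : (i : Fin k) → ZMod (n i)) (p : Fin 6) (c : Fin k) :
    lam N n hd i0 i1 ξ p c = tbl N n hd i0 i1 c p ξ := rfl

lemma tbl_at_i0 : tbl N n hd i0 i1 i0
    = ![evh N n hd i0, evh N n hd i1, evh N n hd i1, evh N n hd i1, evh N n hd i0,
        evh N n hd i0] := by
  unfold tbl; rw [if_pos rfl]

lemma tbl_at_i1 (hne : i0 ≠ i1) : tbl N n hd i0 i1 i1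
    = ![evh N n hd i1, evh N n hd i0, evh N n hd i0, evh N n hd i0, evh N n hd i1,
        evh N n hd i1] := by
  unfold tbl; rw [if_neg (Ne.symm hne), if_pos rfl]

lemma tbl_at_other {c : Fin k} (hc0 : c ≠ i0) (hc1 : c ≠ i1) : tbl N n hd i0 i1 c
    = ![evh N n hd c, evh N n hd i0, evh N n hd i1, evh N n hd i0, evh N n hd i1,
        evh N n hd i1] := by
  unfold tbl; rw [if_neg hc0, if_neg hc1]

lemma sdiag_inv {x : (Matrix (Fin 7) (Fin 7) (Fin k → ZMod N))ˣ} (hx : uG 1 x) (p : Fin 6) :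
    sdiag p x⁻¹ = -(sdiag p x) := by
  have h := sdiag_mul hx (uG_inv (le_refl 1) hx) p
  rw [mul_inv_cancel, sdiag_one] at h
  have h3 := h.symm
  rw [add_eq_zero_iff_eq_neg] at h3
  rw [h3]
  abel

end Build4


section Build5

variable (N : ℕ) [NeZero N] {k : ℕ} (n : Fin k → ℕ) (hd : ∀ t, n t ∣ N) (i0 i1 : Fin k)

lemma marginal_eq (hn2 : ∀ t, 0 < n t) (hne : i0 ≠ i1)
    (h00 : psi N n hd i0 1 = 1) (h11 : psi N n hd i1 1 = 1) :
    (((theta N n hd i0 i1 hn2).ker : Subgroup ↥(Esub N n hd i0 i1)) :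
      Set ↥(Esub N n hd i0 i1)) = n21MarginalSet ↥(Esub N n hd i0 i1) := by
  ext a
  simp only [SetLike.mem_coe]
  constructor
  · intro ha
    intro g i
    have hk := (mem_ker_iff N n hd i0 i1 hn2 a).mp ha
    have hδ : uG 2 ((a : ↥(Esub N n hd i0 i1)) : (Matrix (Fin 7) (Fin 7) (Fin k → ZMod N))ˣ) :=
      uG2_of_sdiag_zero N (uG1_of_mem N n hd i0 i1 a.2) hk
    apply Subtype.ext
    show ((Esub N n hd i0 i1).subtype (n21W (Function.update g i (g i * a))))
        = (Esub N n hd i0 i1).subtype (n21W g)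
    rw [map_n21W, map_n21W, comp_update]
    have e2 : (Esub N n hd i0 i1).subtype (g i * a)
        = (fun j => (Esub N n hd i0 i1).subtype (g j)) i
          * ((a : ↥(Esub N n hd i0 i1)) : (Matrix (Fin 7) (Fin 7) (Fin k → ZMod N))ˣ) := by
      rw [map_mul]
      rfl
    rw [e2]
    exact matrix_margin hδ _ (fun j => uG1_of_mem N n hd i0 i1 (g j).2) i
  · intro ha
    have hval : ∀ w1 w2 w3 w4 w5 : (i : Fin k) → ZMod (n i),
        TBm (lam N n hd i0 i1 (xi N n hd i0 i1 a)) (lam N n hd i0 i1 w1)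
            (lam N n hd i0 i1 w2) 0 3
          * TBm (lam N n hd i0 i1 w3) (lam N n hd i0 i1 w4) (lam N n hd i0 i1 w5) 3 6
        - TBm (lam N n hd i0 i1 w3) (lam N n hd i0 i1 w4) (lam N n hd i0 i1 w5) 0 3
          * TBm (lam N n hd i0 i1 (xi N n hd i0 i1 a)) (lam N n hd i0 i1 w1)
            (lam N n hd i0 i1 w2) 3 6
        = 0 := by
      intro w1 w2 w3 w4 w5
      set bb : ↥(Esub N n hd i0 i1) := ⟨clU (lam N n hd i0 i1 w1), clU_mem N n hd i0 i1 w1⟩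
      set cc : ↥(Esub N n hd i0 i1) := ⟨clU (lam N n hd i0 i1 w2), clU_mem N n hd i0 i1 w2⟩
      set dd : ↥(Esub N n hd i0 i1) := ⟨clU (lam N n hd i0 i1 w3), clU_mem N n hd i0 i1 w3⟩
      set ee : ↥(Esub N n hd i0 i1) := ⟨clU (lam N n hd i0 i1 w4), clU_mem N n hd i0 i1 w4⟩
      set ff : ↥(Esub N n hd i0 i1) := ⟨clU (lam N n hd i0 i1 w5), clU_mem N n hd i0 i1 w5⟩
      have h2 := ha (mk6 (1 : ↥(Esub N n hd i0 i1)) bb cc dd ee ff) 0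
      rw [upd0] at h2
      rw [show mk6 (1 : ↥(Esub N n hd i0 i1)) bb cc dd ee ff 0 = 1 from rfl, one_mul] at h2
      rw [n21W_one0] at h2
      have h3 := congrArg (Esub N n hd i0 i1).subtype h2
      rw [map_n21W, coe_mk6_hom, map_one] at h3
      have hba : (Esub N n hd i0 i1).subtype bb = clU (lam N n hd i0 i1 w1) := rfl
      have hca : (Esub N n hd i0 i1).subtype cc = clU (lam N n hd i0 i1 w2) := rfl
      have hda : (Esub N n hd i0 i1).subtype dd = clU (lam N n hd i0 i1 w3) := rfl
      have hea : (Esub N n hd i0 i1).subtype ee = clU (lam N n hd i0 i1 w4) := rfl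
      have hfa : (Esub N n hd i0 i1).subtype ff = clU (lam N n hd i0 i1 w5) := rfl
      rw [hba, hca, hda, hea, hfa] at h3
      set av : (Matrix (Fin 7) (Fin 7) (Fin k → ZMod N))ˣ :=
        ((a : ↥(Esub N n hd i0 i1)) : (Matrix (Fin 7) (Fin 7) (Fin k → ZMod N))ˣ) with hav
      set δ := (clU (lam N n hd i0 i1 (xi N n hd i0 i1 a)))⁻¹ * av with hδdef
      have hδ1 : uG 1 δ :=
        uG_mul (uG_inv (le_refl 1) (clU_uG1 _)) (uG1_of_mem N n hd i0 i1 a.2)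
      have hδs : ∀ p, sdiag p δ = 0 := by
        intro p
        rw [hδdef, sdiag_mul (uG_inv (le_refl 1) (clU_uG1 _)) (uG1_of_mem N n hd i0 i1 a.2) p,
          sdiag_inv N (clU_uG1 _), sdiag_clU]
        rw [show sdiag p av = lam N n hd i0 i1 (xi N n hd i0 i1 a) p from xi_spec N n hd i0 i1 a p]
        abel
      have hδ2 : uG 2 δ := uG2_of_sdiag_zero N hδ1 hδs
      have ha' : ((Esub N n hd i0 i1).subtype a)
          = clU (lam N n hd i0 i1 (xi N n hd i0 i1 a)) * δ := by
        rw [hδdef, mul_inv_cancel_left]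
        rfl
      rw [ha'] at h3
      rw [msl0 hδ2 (clU_uG1 _) (clU_uG1 _) (clU_uG1 _) (clU_uG1 _) (clU_uG1 _) (clU_uG1 _)] at h3
      have h4 := congrArg
        (fun u : (Matrix (Fin 7) (Fin 7) (Fin k → ZMod N))ˣ =>
          ((u : Matrix (Fin 7) (Fin 7) (Fin k → ZMod N))) 0 6) h3
      beta_reduce at h4
      rw [clean_entry] at h4
      rw [Units.val_one, Matrix.one_apply_ne (by decide)] at h4
      exact h4
    have hxi : ∀ c, psi N n hd c (xi N n hd i0 i1 a c) = 0 := by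
      intro c
      have hx0i1 : (Pi.single i0 (1 : ZMod (n i0)) : (i : Fin k) → ZMod (n i)) i1 = 0 :=
        Pi.single_eq_of_ne (Ne.symm hne) _
      have hx1i0 : (Pi.single i1 (1 : ZMod (n i1)) : (i : Fin k) → ZMod (n i)) i0 = 0 :=
        Pi.single_eq_of_ne hne _
      by_cases hc0 : c = i0
      · rw [hc0]
        have h := hval (Pi.single i1 1) (Pi.single i1 1) (Pi.single i1 1)
          (Pi.single i0 1) (Pi.single i0 1)
        simp only [TBm_03_val, TBm_36_val] at h
        have h2 := congrFun h i0
        simp only [Pi.sub_apply, Pi.mul_apply, Pi.zero_apply, lam_apply, tbl_at_i0,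
          vec6h_app0, vec6h_app1, vec6h_app2, vec6h_app3, vec6h_app4, vec6h_app5,
          evh_apply, Pi.single_eq_same, hx0i1, hx1i0, map_zero, map_one, h00, h11] at h2
        linear_combination h2
      · by_cases hc1 : c = i1
        · rw [hc1]
          have h := hval (Pi.single i0 1) (Pi.single i0 1) (Pi.single i0 1)
            (Pi.single i1 1) (Pi.single i1 1)
          simp only [TBm_03_val, TBm_36_val] at h
          have h2 := congrFun h i1
          simp only [Pi.sub_apply, Pi.mul_apply, Pi.zero_apply, lam_apply, tbl_at_i1 N n hd i0 i1 hne,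
            vec6h_app0, vec6h_app1, vec6h_app2, vec6h_app3, vec6h_app4, vec6h_app5,
            evh_apply, Pi.single_eq_same, hx0i1, hx1i0, map_zero, map_one, h00, h11] at h2
          linear_combination h2
        · have hxc0 : (Pi.single i0 (1 : ZMod (n i0)) : (i : Fin k) → ZMod (n i)) c = 0 :=
            Pi.single_eq_of_ne hc0 _
          have hxc1 : (Pi.single i1 (1 : ZMod (n i1)) : (i : Fin k) → ZMod (n i)) c = 0 :=
            Pi.single_eq_of_ne hc1 _
          have h := hval (Pi.single i0 1) (Pi.single i1 1) (Pi.single i0 1)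
            (Pi.single i1 1) (Pi.single i1 1)
          simp only [TBm_03_val, TBm_36_val] at h
          have h2 := congrFun h c
          simp only [Pi.sub_apply, Pi.mul_apply, Pi.zero_apply, lam_apply,
            tbl_at_other N n hd i0 i1 hc0 hc1,
            vec6h_app0, vec6h_app1, vec6h_app2, vec6h_app3, vec6h_app4, vec6h_app5,
            evh_apply, Pi.single_eq_same, hx0i1, hx1i0, hxc0, hxc1, map_zero, map_one,
            h00, h11] at h2
          linear_combination h2
    have hxi0 : xi N n hd i0 i1 a = 0 :=
      funext fun c => psi_inj N n hd c (hn2 c) _ (hxi c)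
    apply (mem_ker_iff N n hd i0 i1 hn2 a).mpr
    intro p
    rw [xi_spec N n hd i0 i1 a p, hxi0, lam_zero]
    rfl

end Build5


set_option maxHeartbeats 2000000 in
lemma backward (G : Type) [Group G] (k : ℕ) (n : Fin k → ℕ)
    (hn : ∀ i : Fin k, 2 ≤ n i)
    (hdvd : ∀ i : Fin k, ∀ h : (i : ℕ) + 1 < k, n ⟨(i : ℕ) + 1, h⟩ ∣ n i)
    (hG : Nonempty (G ≃* Multiplicative ((i : Fin k) → ZMod (n i))))
    (h2 : 2 ≤ k) (heq : n ⟨0, (by omega : 1 ≤ k)⟩ = n ⟨1, h2⟩) :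
    IsN21Capable G := by
  set i0 : Fin k := ⟨0, by omega⟩ with hi0
  set i1 : Fin k := ⟨1, by omega⟩ with hi1
  set N := n i0 with hN
  haveI : NeZero N := ⟨by have := hn i0; omega⟩
  have hd : ∀ t, n t ∣ N := by
    intro t
    have h3 := chain_dvd n hdvd (t : ℕ) 0 (by omega)
    have he : (⟨0 + (t:ℕ), by omega⟩ : Fin k) = t := by
      apply Fin.ext
      show 0 + (t:ℕ) = (t:ℕ)
      omega
    rw [he] at h3
    exact h3
  have hn2 : ∀ t, 0 < n t := fun t => by have := hn t; omega
  have hne : i0 ≠ i1 := by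
    intro hcon
    have h4 := congrArg Fin.val hcon
    rw [hi0, hi1] at h4
    simp at h4
  have h00 : psi N n hd i0 1 = 1 := by
    rw [psi_one]
    rw [show N / n i0 = 1 from Nat.div_self (by have := hn i0; omega)]
    norm_num
  have h11 : psi N n hd i1 1 = 1 := by
    rw [psi_one]
    have hNe : N = n i1 := by
      rw [hN, hi0, hi1]
      exact heq
    rw [show N / n i1 = 1 by rw [hNe]; exact Nat.div_self (by have := hn i1; omega)]
    norm_num
  refine ⟨↥(Esub N n hd i0 i1), inferInstance, (theta N n hd i0 i1 hn2).ker,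
    inferInstance, ?_, ?_⟩
  · exact marginal_eq N n hd i0 i1 hn2 hne h00 h11
  · obtain ⟨φ⟩ := hG
    have e1 : ↥(Esub N n hd i0 i1) ⧸ (theta N n hd i0 i1 hn2).ker
        ≃* Multiplicative ((i : Fin k) → ZMod (n i)) :=
      QuotientGroup.quotientKerEquivOfSurjective _ (theta_surj N n hd i0 i1 hn2)
    exact ⟨φ.trans e1.symm⟩

end N21


set_option maxHeartbeats 1000000

/-- A finite abelian group `ℤ_{n_1} ⊕ … ⊕ ℤ_{n_k}` (with `k ≥ 1`, each `n_i ≥ 2`,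
`n_{i+1} ∣ n_i`) is `N_{2,1}`-capable if and only if `k ≥ 2` and `n_1 = n_2`. -/
theorem n21Capable_finite_abelian_iff (G : Type) [Group G]
    (k : ℕ) (hk : 1 ≤ k) (n : Fin k → ℕ)
    (hn : ∀ i : Fin k, 2 ≤ n i)
    (hdvd : ∀ i : Fin k, ∀ h : (i : ℕ) + 1 < k, n ⟨(i : ℕ) + 1, h⟩ ∣ n i)
    (hG : Nonempty (G ≃* Multiplicative ((i : Fin k) → ZMod (n i)))) :
    IsN21Capable G ↔ ∃ h : 2 ≤ k, n ⟨0, by omega⟩ = n ⟨1, by omega⟩ := by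
  constructor
  · exact fun hc => N21.forward G k hk n hn hdvd hG hc
  · rintro ⟨h2, heq⟩
    exact N21.backward G k n hn hdvd hG h2 heq
end

section
/- A group G is capable if and only if for every non-identity element g of G there exist a group E and a surjective group homomorphism ψ : E → G such that the kernel of ψ is contained in the center Z(E) of E and g does not belong to the image ψ(Z(E)) of the center of E under ψ. -/
/-- A group `G` is capable if it is isomorphic to `E / Z(E)` for some group `E`. -/
def Capable (G : Type) [Group G] : Prop :=
  ∃ (E : Type) (_ : Group E), Nonempty (G ≃* E ⧸ Subgroup.center E)

/-- A group `G` is capable if and only if for every non-identity `g ∈ G` there are a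
group `E` and a surjection `ψ : E → G` with `ker ψ ≤ Z(E)` and `g ∉ ψ(Z(E))`. -/
theorem capable_iff_forall_surjection (G : Type) [Group G] :
    Capable G ↔ ∀ g : G, g ≠ 1 →
      ∃ (E : Type) (_ : Group E) (ψ : E →* G),
        Function.Surjective ψ ∧ ψ.ker ≤ Subgroup.center E ∧
        g ∉ (Subgroup.center E).map ψ := by
  classical
  constructor
  · rintro ⟨E, _, ⟨e⟩⟩ g hg
    refine ⟨E, inferInstance, e.symm.toMonoidHom.comp
      (QuotientGroup.mk' (Subgroup.center E)), ?_, ?_, ?_⟩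
    · exact e.symm.surjective.comp (QuotientGroup.mk'_surjective _)
    · intro x hx
      have : e.symm (QuotientGroup.mk' (Subgroup.center E) x) = 1 := hx
      have h2 : QuotientGroup.mk' (Subgroup.center E) x = 1 := by
        have := congrArg e this
        simpa using this
      exact (QuotientGroup.ker_mk' (Subgroup.center E)) ▸
        MonoidHom.mem_ker.2 h2
    · rintro ⟨z, hz, hz2⟩
      apply hg
      have : QuotientGroup.mk' (Subgroup.center E) z = 1 := by
        simpa [QuotientGroup.eq_one_iff] using hz
      simp only [MonoidHom.comp_apply] at hz2
      rw [this] at hz2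
      simpa using hz2.symm
  · intro h
    by_cases hT : ∀ g : G, g = 1
    · haveI : Subsingleton G := ⟨fun a b => (hT a).trans (hT b).symm⟩
      haveI : Unique G := ⟨⟨1⟩, fun a => hT a⟩
      haveI : Subsingleton (G ⧸ Subgroup.center G) :=
        ⟨fun a b => by
          obtain ⟨x, rfl⟩ := QuotientGroup.mk_surjective a
          obtain ⟨y, rfl⟩ := QuotientGroup.mk_surjective b
          rw [Subsingleton.elim x y]⟩
      refine ⟨G, inferInstance, ⟨?_⟩⟩
      exact { toFun := fun _ => 1, invFun := fun _ => 1,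
              left_inv := fun x => Subsingleton.elim _ _,
              right_inv := fun x => Subsingleton.elim _ _,
              map_mul' := fun _ _ => Subsingleton.elim _ _ }
    · push_neg at hT
      obtain ⟨g0, hg0⟩ := hT
      set ι := {g : G // g ≠ 1} with hι
      choose E inst ψ hsurj hker hnot using fun i : ι => h i.1 i.2
      let i0 : ι := ⟨g0, hg0⟩
      -- the fiber product subgroup
      let S : Subgroup (∀ i, E i) :=
        { carrier := {f | ∀ i j, ψ i (f i) = ψ j (f j)}
          one_mem' := by intro i j; simp
          mul_mem' := by
            intro a b ha hb i j
            simp only [Pi.mul_apply, map_mul, ha i j, hb i j]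
          inv_mem' := by
            intro a ha i j
            simp only [Pi.inv_apply, map_inv, ha i j] }
      have memS : ∀ f : ∀ i, E i, f ∈ S ↔ ∀ i j, ψ i (f i) = ψ j (f j) :=
        fun f => Iff.rfl
      let φ : S →* G :=
        { toFun := fun f => ψ i0 (f.1 i0)
          map_one' := by simp
          map_mul' := fun a b => by simp }
      have hφ : ∀ f : S, φ f = ψ i0 (f.1 i0) := fun f => rfl
      have hsurjφ : Function.Surjective φ := by
        intro g
        choose x hx using fun i => hsurj i g
        refine ⟨⟨x, fun i j => by rw [hx i, hx j]⟩, hx i0⟩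
      -- a lemma: any element of any E i extends to an element of S
      have extend : ∀ (i : ι) (x : E i), ∃ s : S, s.1 i = x := by
        intro i x
        choose y hy using fun j => hsurj j (ψ i x)
        let s : ∀ j, E j := Function.update y i x
        have hs : ∀ j, ψ j (s j) = ψ i x := by
          intro j
          by_cases hji : j = i
          · subst hji
            simp [s, Function.update_self]
          · simp [s, Function.update_of_ne hji, hy j]
        exact ⟨⟨s, fun j k => by rw [hs j, hs k]⟩, Function.update_self i x y⟩
      -- components of central elements of S are central
      have central_comp : ∀ z : S, z ∈ Subgroup.center S →
          ∀ i, z.1 i ∈ Subgroup.center (E i) := by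
        intro z hz i
        rw [Subgroup.mem_center_iff]
        intro x
        obtain ⟨s, hs⟩ := extend i x
        have := (Subgroup.mem_center_iff.mp hz) s
        have h2 : s.1 * z.1 = z.1 * s.1 := congrArg Subtype.val this
        have h3 := congrFun h2 i
        simpa [hs] using h3
      -- ker φ ≤ center S
      have hkerle : φ.ker ≤ Subgroup.center S := by
        intro f hf
        have h1 : ψ i0 (f.1 i0) = 1 := hf
        have hall : ∀ i, f.1 i ∈ Subgroup.center (E i) := by
          intro i
          apply hker i
          have : ψ i (f.1 i) = ψ i0 (f.1 i0) := f.2 i i0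
          rw [MonoidHom.mem_ker, this, h1]
        rw [Subgroup.mem_center_iff]
        intro s
        apply Subtype.ext
        funext i
        exact (Subgroup.mem_center_iff.mp (hall i)) (s.1 i)
      -- center S ≤ ker φ
      have hcenle : Subgroup.center S ≤ φ.ker := by
        intro z hz
        rw [MonoidHom.mem_ker]
        by_contra hne
        have hi : (φ z : G) ≠ 1 := hne
        let i : ι := ⟨φ z, hi⟩
        apply hnot i
        refine ⟨z.1 i, central_comp z hz i, ?_⟩
        exact (z.2 i i0)
      have hkereq : φ.ker = Subgroup.center S := le_antisymm hkerle hcenle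
      refine ⟨S, inferInstance, ⟨?_⟩⟩
      exact ((QuotientGroup.quotientKerEquivOfSurjective φ hsurjφ).symm.trans
        (QuotientGroup.quotientMulEquivOfEq hkereq))
end

section
/- Let G be an abelian group. Then G is capable if and only if for every non-identity element x of G, the homomorphism H_2(G; ℤ) → H_2(G/⟨x⟩; ℤ) on second group homology with trivial ℤ coefficients induced by the quotient map G → G/⟨x⟩ has non-trivial kernel, where ⟨x⟩ denotes the cyclic subgroup generated by x. -/
/-!  The Schur multiplier `H₂(G; ℤ)` of a group `G` (second integral group homology
with trivial coefficients), realized via Hopf's formula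
`H₂(G; ℤ) ≅ (R ∩ [F, F]) / [F, R]` for the canonical free presentation
`1 → R → F → G → 1` with `F` the free group on the underlying set of `G`. -/

/-- The canonical presentation surjection `F = FreeGroup G →* G`. -/
def presHom (G : Type) [Group G] : FreeGroup G →* G := FreeGroup.lift id

/-- The relation subgroup `R` of the canonical free presentation of `G`. -/
def presRel (G : Type) [Group G] : Subgroup (FreeGroup G) := (presHom G).ker

instance presRel_normal (G : Type) [Group G] : (presRel G).Normal :=
  MonoidHom.normal_ker _

/-- The subgroup `R ∩ [F, F]` of `F = FreeGroup G`. -/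
def hopfTop (G : Type) [Group G] : Subgroup (FreeGroup G) :=
  presRel G ⊓ commutator (FreeGroup G)

/-- The subgroup `[F, R]`, viewed as a subgroup of `R ∩ [F, F]`. -/
def hopfBot (G : Type) [Group G] : Subgroup ↥(hopfTop G) :=
  (⁅(⊤ : Subgroup (FreeGroup G)), presRel G⁆).subgroupOf (hopfTop G)

instance hopfBot_normal (G : Type) [Group G] : (hopfBot G).Normal :=
  Subgroup.normal_subgroupOf

/-- **Hopf's formula**: the Schur multiplier `H₂(G; ℤ)` of `G`, i.e. the second group
homology of `G` with trivial `ℤ` coefficients, given as `(R ∩ [F, F]) / [F, R]`. -/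
def schurMultiplier (G : Type) [Group G] : Type :=
  ↥(hopfTop G) ⧸ hopfBot G

noncomputable instance (G : Type) [Group G] : Group (schurMultiplier G) :=
  inferInstanceAs (Group (↥(hopfTop G) ⧸ hopfBot G))

lemma presHom_comp {G Q : Type} [Group G] [Group Q] (f : G →* Q) :
    (presHom Q).comp (FreeGroup.map f) = f.comp (presHom G) := by
  apply FreeGroup.ext_hom
  intro a
  simp [presHom]

lemma freeGroup_map_mem_hopfTop {G Q : Type} [Group G] [Group Q] (f : G →* Q)
    (x : ↥(hopfTop G)) : FreeGroup.map f (x : FreeGroup G) ∈ hopfTop Q := by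
  obtain ⟨hker, hcomm⟩ := x.2
  constructor
  · show FreeGroup.map f (x : FreeGroup G) ∈ (presHom Q).ker
    have h1 : presHom Q (FreeGroup.map f (x : FreeGroup G)) =
        f (presHom G (x : FreeGroup G)) := by
      have := congrArg (fun φ => φ (x : FreeGroup G)) (presHom_comp f)
      simpa using this
    have h2 : presHom G (x : FreeGroup G) = 1 := hker
    simp [MonoidHom.mem_ker, h1, h2]
  · have : Subgroup.map (FreeGroup.map f) (commutator (FreeGroup G)) ≤
        commutator (FreeGroup Q) := by
      rw [commutator_def, Subgroup.map_commutator]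
      exact Subgroup.commutator_mono le_top le_top
    exact this ⟨_, hcomm, rfl⟩

/-- The restriction of `FreeGroup.map f` to a homomorphism `R ∩ [F,F] → R' ∩ [F',F']`. -/
def hopfTopMap {G Q : Type} [Group G] [Group Q] (f : G →* Q) :
    ↥(hopfTop G) →* ↥(hopfTop Q) :=
  ((FreeGroup.map f).domRestrict (hopfTop G)).codRestrict (hopfTop Q)
    (fun x => freeGroup_map_mem_hopfTop f x)

lemma hopfBot_le_comap {G Q : Type} [Group G] [Group Q] (f : G →* Q) :
    hopfBot G ≤ (hopfBot Q).comap (hopfTopMap f) := by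
  intro x hx
  have hmap : Subgroup.map (FreeGroup.map f) ⁅(⊤ : Subgroup (FreeGroup G)), presRel G⁆ ≤
      ⁅(⊤ : Subgroup (FreeGroup Q)), presRel Q⁆ := by
    rw [Subgroup.map_commutator]
    refine Subgroup.commutator_mono le_top ?_
    rintro y ⟨z, hz, rfl⟩
    show presHom Q (FreeGroup.map f z) = 1
    have := congrArg (fun φ => φ z) (presHom_comp f)
    simp only [MonoidHom.comp_apply] at this
    rw [this]
    have hz1 : presHom G z = 1 := hz
    simp [hz1]
  exact hmap ⟨_, hx, rfl⟩

/-- The homomorphism `H₂(G; ℤ) →* H₂(Q; ℤ)` induced by `f : G →* Q`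
(functoriality of the Schur multiplier). -/
noncomputable def schurMultiplierMap {G Q : Type} [Group G] [Group Q] (f : G →* Q) :
    schurMultiplier G →* schurMultiplier Q :=
  QuotientGroup.map (hopfBot G) (hopfBot Q) (hopfTopMap f) (hopfBot_le_comap f)

namespace SchurAux

open scoped commutatorElement

variable (G : Type) [Group G]
lemma presHom_surjective : Function.Surjective (presHom G) :=
  fun g => ⟨FreeGroup.of g, by simp [presHom]⟩
abbrev FR : Subgroup (FreeGroup G) := ⁅(⊤ : Subgroup (FreeGroup G)), presRel G⁆
lemma FR_le_presRel : FR G ≤ presRel G := Subgroup.commutator_le_right _ _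
def bigE : Type := FreeGroup G ⧸ FR G
instance : Group (bigE G) := inferInstanceAs (Group (FreeGroup G ⧸ FR G))
def mkE : FreeGroup G →* bigE G := QuotientGroup.mk' (FR G)
lemma mkE_surjective : Function.Surjective (mkE G) := QuotientGroup.mk'_surjective _
def pE : bigE G →* G :=
  QuotientGroup.lift (FR G) (presHom G) (fun w hw => FR_le_presRel G hw)
@[simp] lemma pE_mk (w : FreeGroup G) : pE G (mkE G w) = presHom G w := rfl
lemma pE_surjective : Function.Surjective (pE G) :=
  fun g => ⟨mkE G (FreeGroup.of g), by simp [presHom]⟩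
lemma mkE_eq_one_iff (w : FreeGroup G) : mkE G w = 1 ↔ w ∈ FR G :=
  QuotientGroup.eq_one_iff w
lemma ker_pE_le_center : ∀ e : bigE G, pE G e = 1 → e ∈ Subgroup.center (bigE G) := by
  intro e he
  obtain ⟨w, rfl⟩ := mkE_surjective G e
  rw [Subgroup.mem_center_iff]
  intro u'
  obtain ⟨u, rfl⟩ := mkE_surjective G u'
  have h1 : (⁅u, w⁆ : FreeGroup G) ∈ FR G :=
    Subgroup.commutator_mem_commutator (Subgroup.mem_top u) he
  have h2 : mkE G ⁅u, w⁆ = 1 := (mkE_eq_one_iff G _).mpr h1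
  rw [map_commutatorElement] at h2
  exact commutatorElement_eq_one_iff_mul_comm.mp h2

/-- If the epicenter is trivial then `G` is capable. -/
lemma capable_of_epicenter_eq_bot
    (h : ∀ z ∈ Subgroup.center (bigE G), pE G z = 1) : Capable G := by
  have hker : (pE G).ker = Subgroup.center (bigE G) := by
    apply le_antisymm
    · intro e he
      exact ker_pE_le_center G e he
    · intro z hz
      exact h z hz
  refine ⟨bigE G, inferInstance, ⟨?_⟩⟩
  exact ((QuotientGroup.quotientKerEquivOfSurjective (pE G) (pE_surjective G)).symm.trans
    (QuotientGroup.quotientMulEquivOfEq hker))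

/-- If `G` is capable then the epicenter is trivial. -/
lemma epicenter_eq_bot_of_capable (h : Capable G) :
    ∀ z ∈ Subgroup.center (bigE G), pE G z = 1 := by
  obtain ⟨E', _, ⟨e⟩⟩ := h
  set ψ : E' →* G := e.symm.toMonoidHom.comp (QuotientGroup.mk' (Subgroup.center E')) with hψdef
  have hψsurj : Function.Surjective ψ :=
    e.symm.surjective.comp (QuotientGroup.mk'_surjective _)
  have hψker : ∀ y : E', ψ y = 1 ↔ y ∈ Subgroup.center E' := by
    intro y
    constructor
    · intro hy
      have : (QuotientGroup.mk' (Subgroup.center E')) y = 1 := by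
        have := congrArg e hy
        simpa [hψdef] using this
      exact (QuotientGroup.eq_one_iff y).mp this
    · intro hy
      simp [hψdef, (QuotientGroup.eq_one_iff y).mpr hy]
  -- lift the presentation map
  set φ : FreeGroup G →* E' := FreeGroup.lift (fun g => Function.surjInv hψsurj g) with hφdef
  have hcomp : ∀ w : FreeGroup G, ψ (φ w) = presHom G w := by
    intro w
    have : ψ.comp φ = presHom G := by
      apply FreeGroup.ext_hom
      intro a
      simp [hφdef, presHom, Function.surjInv_eq hψsurj]
    exact congrArg (fun χ => χ w) this
  have hFR : ∀ w ∈ FR G, φ w = 1 := by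
    have hle : FR G ≤ φ.ker := by
      rw [Subgroup.commutator_le]
      intro u _ r hr
      show φ ⁅u, r⁆ = 1
      rw [map_commutatorElement, commutatorElement_eq_one_iff_mul_comm]
      have hφr : φ r ∈ Subgroup.center E' := by
        rw [← hψker, hcomp]
        exact hr
      exact Subgroup.mem_center_iff.mp hφr (φ u)
    intro w hw
    exact hle hw
  set φb : bigE G →* E' := QuotientGroup.lift (FR G) φ hFR with hφbdef
  have hφb_mk : ∀ w : FreeGroup G, φb (mkE G w) = φ w := fun w => rfl
  have hpsi_phib : ∀ z : bigE G, ψ (φb z) = pE G z := by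
    intro z
    obtain ⟨w, rfl⟩ := mkE_surjective G z
    rw [hφb_mk, hcomp, pE_mk]
  intro z hz
  have hcent : φb z ∈ Subgroup.center E' := by
    rw [Subgroup.mem_center_iff]
    intro y
    obtain ⟨u, hu⟩ := presHom_surjective G (ψ y)
    set c : E' := y * (φ u)⁻¹ with hc
    have hcc : c ∈ Subgroup.center E' := by
      rw [← hψker]
      simp [hc, hcomp, hu]
    have hy : y = c * φ u := by simp [hc]
    have hcomm : φ u * φb z = φb z * φ u := by
      have : mkE G u * z = z * mkE G u := (Subgroup.mem_center_iff.mp hz (mkE G u))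
      have := congrArg φb this
      simpa [map_mul, hφb_mk] using this
    rw [hy, mul_assoc, hcomm, ← mul_assoc, ← Subgroup.mem_center_iff.mp hcc (φb z), mul_assoc]
  rw [← hpsi_phib z, hψker]
  exact hcent



/-- If `φ : A →* B` has a section `σ`, then `ker φ ∩ [A,A] ≤ ⁅⊤, ker φ⁆`. -/
lemma ker_inf_commutator_le {A B : Type} [Group A] [Group B] (φ : A →* B) (σ : B →* A)
    (hσ : ∀ b, φ (σ b) = b) {w : A} (hw : w ∈ commutator A) (hker : φ w = 1) :
    w ∈ ⁅(⊤ : Subgroup A), φ.ker⁆ := by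
  set D : Subgroup A := ⁅(⊤ : Subgroup A), φ.ker⁆ with hD
  have hDker : D ≤ φ.ker := Subgroup.commutator_le_right _ _
  set φ₀ : A ⧸ D →* B := QuotientGroup.lift D φ (fun a ha => hDker ha) with hφ₀
  set σ₀ : B →* A ⧸ D := (QuotientGroup.mk' D).comp σ with hσ₀
  have hφσ : ∀ b, φ₀ (σ₀ b) = b := fun b => hσ b
  -- elements of the image of ker φ are central in A ⧸ D
  have hcent : ∀ a₀ : A ⧸ D, φ₀ a₀ = 1 → a₀ ∈ Subgroup.center (A ⧸ D) := by
    intro a₀ ha₀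
    obtain ⟨a, rfl⟩ := QuotientGroup.mk'_surjective D a₀
    rw [Subgroup.mem_center_iff]
    intro u₀
    obtain ⟨u, rfl⟩ := QuotientGroup.mk'_surjective D u₀
    have h1 : (⁅u, a⁆ : A) ∈ D :=
      Subgroup.commutator_mem_commutator (Subgroup.mem_top u) ha₀
    have h2 : (QuotientGroup.mk' D) ⁅u, a⁆ = 1 := (QuotientGroup.eq_one_iff _).mpr h1
    rw [map_commutatorElement] at h2
    exact commutatorElement_eq_one_iff_mul_comm.mp h2
  -- the retraction onto the central kernel
  have hμcent : ∀ a₀ : A ⧸ D, a₀ * (σ₀ (φ₀ a₀))⁻¹ ∈ Subgroup.center (A ⧸ D) := by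
    intro a₀
    apply hcent
    rw [map_mul, map_inv, hφσ, mul_inv_cancel]
  set ρ : A ⧸ D →* A ⧸ D := MonoidHom.mk' (fun a₀ => a₀ * (σ₀ (φ₀ a₀))⁻¹) (by
    intro a b
    have hb := Subgroup.mem_center_iff.mp (hμcent b)
    have ha := Subgroup.mem_center_iff.mp (hμcent a)
    calc a * b * (σ₀ (φ₀ (a * b)))⁻¹
        = a * (b * (σ₀ (φ₀ b))⁻¹) * (σ₀ (φ₀ a))⁻¹ := by
          rw [map_mul, map_mul, mul_inv_rev, mul_assoc, mul_assoc, mul_assoc]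
      _ = (b * (σ₀ (φ₀ b))⁻¹) * (a * (σ₀ (φ₀ a))⁻¹) := by
          rw [hb a, mul_assoc]
      _ = (a * (σ₀ (φ₀ a))⁻¹) * (b * (σ₀ (φ₀ b))⁻¹) := by
          rw [ha (b * (σ₀ (φ₀ b))⁻¹)]) with hρ
  have hρ_comm : ∀ c ∈ commutator (A ⧸ D), ρ c = 1 := by
    have hle : commutator (A ⧸ D) ≤ ρ.ker := by
      rw [commutator_def, Subgroup.commutator_le]
      intro a _ b _
      show ρ ⁅a, b⁆ = 1
      rw [map_commutatorElement, commutatorElement_eq_one_iff_mul_comm]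
      exact Subgroup.mem_center_iff.mp (hμcent _) _
    exact fun c hc => hle hc
  have hwq : (QuotientGroup.mk' D) w ∈ commutator (A ⧸ D) := by
    rw [commutator_def]
    have : Subgroup.map (QuotientGroup.mk' D) (commutator A) ≤
        ⁅(⊤ : Subgroup (A ⧸ D)), ⊤⁆ := by
      rw [commutator_def, Subgroup.map_commutator]
      exact Subgroup.commutator_mono le_top le_top
    exact this ⟨w, hw, rfl⟩
  have h1 : ρ ((QuotientGroup.mk' D) w) = (QuotientGroup.mk' D) w := by
    show (QuotientGroup.mk' D) w * (σ₀ (φ₀ ((QuotientGroup.mk' D) w)))⁻¹ = _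
    have : φ₀ ((QuotientGroup.mk' D) w) = φ w := rfl
    rw [this, hker, map_one, inv_one, mul_one]
  have h2 := hρ_comm _ hwq
  rw [h1] at h2
  exact (QuotientGroup.eq_one_iff w).mp h2


section Comm

lemma ker_eq_bot_of_central_lift (G : Type) [CommGroup G] (x : G)
    (hx : ∃ z ∈ Subgroup.center (bigE G), pE G z = x) :
    (schurMultiplierMap (QuotientGroup.mk' (Subgroup.zpowers x))).ker = ⊥ := by
  obtain ⟨z, hzc, hzx⟩ := hx
  set N : Subgroup G := Subgroup.zpowers x with hN
  set f : G →* G ⧸ N := QuotientGroup.mk' N with hf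
  set φ' : FreeGroup G →* FreeGroup (G ⧸ N) := FreeGroup.map ⇑f with hφ'
  set s : G ⧸ N → G := Function.surjInv (QuotientGroup.mk'_surjective N) with hs
  set σ : FreeGroup (G ⧸ N) →* FreeGroup G := FreeGroup.map s with hσdef
  have hσ : ∀ b, φ' (σ b) = b := by
    intro b
    show FreeGroup.map ⇑f (FreeGroup.map s b) = b
    rw [FreeGroup.map.comp]
    have hid : (⇑f ∘ s) = id := funext (fun q => Function.surjInv_eq _ q)
    rw [hid]
    exact FreeGroup.map.id b
  have hφsurj : Function.Surjective φ' := fun y => ⟨σ y, hσ y⟩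
  set M : Subgroup (FreeGroup G) := Subgroup.comap φ' (presRel (G ⧸ N)) with hM
  have hMchar : ∀ m : FreeGroup G, m ∈ M → presHom G m ∈ N := by
    intro m hm
    have h1 : presHom (G ⧸ N) (φ' m) = 1 := hm
    have h2 := congrArg (fun χ => χ m) (presHom_comp f)
    simp only [MonoidHom.comp_apply] at h2
    have h3 : f (presHom G m) = 1 := by rw [← h2]; exact h1
    exact (QuotientGroup.eq_one_iff _).mp h3
  have hcomm_le : ⁅(⊤ : Subgroup (FreeGroup G)), M⁆ ≤ FR G := by
    rw [Subgroup.commutator_le]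
    intro u _ m hm
    rw [← mkE_eq_one_iff, map_commutatorElement, commutatorElement_eq_one_iff_mul_comm]
    have hmc : mkE G m ∈ Subgroup.center (bigE G) := by
      obtain ⟨k, hk⟩ := Subgroup.mem_zpowers_iff.mp (hMchar m hm)
      have h1 : pE G (mkE G m * (z ^ k)⁻¹) = 1 := by
        rw [map_mul, map_inv, map_zpow, hzx, pE_mk, ← hk]
        group
      have h2 := ker_pE_le_center G _ h1
      have h3 : mkE G m = (mkE G m * (z ^ k)⁻¹) * z ^ k := by group
      rw [h3]
      exact Subgroup.mul_mem _ h2 (Subgroup.zpow_mem _ hzc k)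
    exact Subgroup.mem_center_iff.mp hmc (mkE G u)
  rw [eq_bot_iff]
  intro c hc
  obtain ⟨W, rfl⟩ := QuotientGroup.mk'_surjective (hopfBot G) c
  refine Subgroup.mem_bot.mpr ?_
  replace hc := MonoidHom.mem_ker.mp hc
  have hφW : φ' (W : FreeGroup G) ∈
      ⁅(⊤ : Subgroup (FreeGroup (G ⧸ N))), presRel (G ⧸ N)⁆ := by
    have h1 : QuotientGroup.map (hopfBot G) (hopfBot (G ⧸ N)) (hopfTopMap f)
        (hopfBot_le_comap f) (QuotientGroup.mk W) = 1 := hc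
    rw [QuotientGroup.map_mk, QuotientGroup.eq_one_iff] at h1
    exact Subgroup.mem_subgroupOf.mp h1
  have himg : ⁅(⊤ : Subgroup (FreeGroup (G ⧸ N))), presRel (G ⧸ N)⁆ =
      Subgroup.map φ' ⁅(⊤ : Subgroup (FreeGroup G)), M⁆ := by
    rw [Subgroup.map_commutator, Subgroup.map_top_of_surjective _ hφsurj, hM,
        Subgroup.map_comap_eq_self_of_surjective hφsurj]
  rw [himg] at hφW
  obtain ⟨v, hv, hvw⟩ := hφW
  have hkerM : φ'.ker ≤ M := by
    intro k hk
    show φ' k ∈ presRel (G ⧸ N)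
    rw [MonoidHom.mem_ker.mp hk]
    exact Subgroup.one_mem _
  have hwv : (W : FreeGroup G) * v⁻¹ ∈ ⁅(⊤ : Subgroup (FreeGroup G)), φ'.ker⁆ := by
    apply ker_inf_commutator_le φ' σ hσ
    · have h1 : (W : FreeGroup G) ∈ commutator (FreeGroup G) :=
        (Subgroup.mem_inf.mp W.2).2
      have h2 : v ∈ commutator (FreeGroup G) := by
        rw [commutator_def]
        exact Subgroup.commutator_mono le_top le_top hv
      exact Subgroup.mul_mem _ h1 (Subgroup.inv_mem _ h2)
    · rw [map_mul, map_inv, hvw, mul_inv_cancel]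
  have hWM : (W : FreeGroup G) ∈ ⁅(⊤ : Subgroup (FreeGroup G)), M⁆ := by
    have h3 : (W : FreeGroup G) * v⁻¹ ∈ ⁅(⊤ : Subgroup (FreeGroup G)), M⁆ :=
      Subgroup.commutator_mono le_top hkerM hwv
    have h4 := Subgroup.mul_mem _ h3 hv
    simpa using h4
  have hWbot : W ∈ hopfBot G := Subgroup.mem_subgroupOf.mpr (hcomm_le hWM)
  exact (QuotientGroup.eq_one_iff W).mpr hWbot

lemma ker_ne_bot_of_no_central_lift (G : Type) [CommGroup G] (x : G)
    (hx : ∀ z ∈ Subgroup.center (bigE G), pE G z ≠ x) :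
    (schurMultiplierMap (QuotientGroup.mk' (Subgroup.zpowers x))).ker ≠ ⊥ := by
  set N : Subgroup G := Subgroup.zpowers x with hN
  set f : G →* G ⧸ N := QuotientGroup.mk' N with hf
  have hz₀ : mkE G (FreeGroup.of x) ∉ Subgroup.center (bigE G) := by
    intro hmem
    exact hx _ hmem (by simp [presHom])
  rw [Subgroup.mem_center_iff] at hz₀
  push_neg at hz₀
  obtain ⟨u₀, hu₀⟩ := hz₀
  obtain ⟨b, rfl⟩ := mkE_surjective G u₀
  set w : FreeGroup G := ⁅FreeGroup.of x, b⁆ with hw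
  have hwR : w ∈ presRel G := by
    show presHom G w = 1
    rw [hw, map_commutatorElement, commutatorElement_eq_one_iff_mul_comm]
    exact mul_comm _ _
  have hwC : w ∈ commutator (FreeGroup G) :=
    Subgroup.commutator_mem_commutator (Subgroup.mem_top _) (Subgroup.mem_top _)
  have hwtop : w ∈ hopfTop G := Subgroup.mem_inf.mpr ⟨hwR, hwC⟩
  have hwnot : w ∉ FR G := by
    intro hmem
    apply hu₀
    have h1 := (mkE_eq_one_iff G w).mpr hmem
    rw [hw, map_commutatorElement] at h1
    exact (commutatorElement_eq_one_iff_mul_comm.mp h1).symm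
  have hφw : FreeGroup.map ⇑f w ∈
      ⁅(⊤ : Subgroup (FreeGroup (G ⧸ N))), presRel (G ⧸ N)⁆ := by
    have hfx : FreeGroup.map ⇑f (FreeGroup.of x) ∈ presRel (G ⧸ N) := by
      show presHom (G ⧸ N) (FreeGroup.map ⇑f (FreeGroup.of x)) = 1
      rw [FreeGroup.map.of]
      have : presHom (G ⧸ N) (FreeGroup.of (f x)) = f x := by simp [presHom]
      rw [this]
      exact (QuotientGroup.eq_one_iff x).mpr (Subgroup.mem_zpowers x)
    have h2 : FreeGroup.map ⇑f w =
        ⁅FreeGroup.map ⇑f (FreeGroup.of x), FreeGroup.map ⇑f b⁆ := by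
      rw [hw, map_commutatorElement]
    rw [h2, ← commutatorElement_inv]
    exact Subgroup.inv_mem _
      (Subgroup.commutator_mem_commutator (Subgroup.mem_top _) hfx)
  set W : ↥(hopfTop G) := ⟨w, hwtop⟩ with hW
  have hc1 : (QuotientGroup.mk W : schurMultiplier G) ≠ 1 := by
    intro h1
    exact hwnot (Subgroup.mem_subgroupOf.mp ((QuotientGroup.eq_one_iff W).mp h1))
  have hc2 : (QuotientGroup.mk W : schurMultiplier G) ∈ (schurMultiplierMap f).ker := by
    refine MonoidHom.mem_ker.mpr ?_
    show QuotientGroup.map (hopfBot G) (hopfBot (G ⧸ N)) (hopfTopMap f)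
        (hopfBot_le_comap f) (QuotientGroup.mk W) = 1
    rw [QuotientGroup.map_mk, QuotientGroup.eq_one_iff]
    exact Subgroup.mem_subgroupOf.mpr hφw
  intro hbot
  exact hc1 (Subgroup.mem_bot.mp (hbot.le hc2))

end Comm

end SchurAux

/-- An abelian group `G` is capable if and only if for every non-identity `x ∈ G` the
induced homomorphism `H₂(G; ℤ) → H₂(G/⟨x⟩; ℤ)` on second integral group homology
(Schur multipliers) has non-trivial kernel, where `⟨x⟩` is the cyclic subgroup
generated by `x`. -/

theorem abelian_capable_iff_schurMultiplier_kernels (G : Type) [CommGroup G] :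
    Capable G ↔ ∀ x : G, x ≠ 1 →
      (schurMultiplierMap (QuotientGroup.mk' (Subgroup.zpowers x))).ker ≠ ⊥ := by
  constructor
  · intro h x hx1
    apply SchurAux.ker_ne_bot_of_no_central_lift
    intro z hz
    rw [SchurAux.epicenter_eq_bot_of_capable G h z hz]
    exact fun h1 => hx1 h1.symm
  · intro h
    apply SchurAux.capable_of_epicenter_eq_bot
    intro z hz
    by_contra hne
    exact h (SchurAux.pE G z) hne
      (SchurAux.ker_eq_bot_of_central_lift G (SchurAux.pE G z) ⟨z, hz, rfl⟩)
end
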